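/- arXiv:1411.1348 — 5 statements merged into one kernel-verified Lean document; each statement's English description precedes it below -/
import Mathlib

section
/- Sklar's theorem (existence and uniqueness): Let (X,Y) be a bivariate random variable on ℝ² with joint cumulative distribution function F_{X,Y}(x,y) = P(X ≤ x, Y ≤ y) and marginal cumulative distribution functions F_X and F_Y. Then there exists a bivariate copula C : [0,1]² → [0,1] such that F_{X,Y}(x,y) = C(F_X(x), F_Y(y)) for all x, y ∈ ℝ. Moreover, if F_X and F_Y are continuous, then C is unique on [0,1]². -/
open MeasureTheory Set Filter
open scoped ENNReal

noncomputable section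
namespace SklarProof

def lam : Measure ℝ := volume.restrict (Icc 0 1)

instance : IsProbabilityMeasure lam := by
  constructor
  rw [lam, Measure.restrict_apply_univ]
  simp [Real.volume_Icc]

lemma lam_compl_Icc : lam (Icc (0:ℝ) 1)ᶜ = 0 := by
  rw [lam, Measure.restrict_apply (measurableSet_Icc.compl)]
  simp

lemma lam_singleton (a : ℝ) : lam {a} = 0 :=
  le_antisymm (le_trans (Measure.restrict_le_self _) (by simp)) zero_le

variable (ν : Measure ℝ)

def Gf (s : ℝ) : ℝ := (ν (Iic s)).toReal
def Lf (s : ℝ) : ℝ := (ν (Iio s)).toReal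
def Tf (p : ℝ × ℝ) : ℝ := Lf ν p.1 + p.2 * (Gf ν p.1 - Lf ν p.1)

variable [IsFiniteMeasure ν]

lemma Gf_mono : Monotone (Gf ν) := fun _ _ h =>
  ENNReal.toReal_mono (measure_ne_top _ _) (measure_mono (Iic_subset_Iic.2 h))

lemma Lf_mono : Monotone (Lf ν) := fun _ _ h =>
  ENNReal.toReal_mono (measure_ne_top _ _) (measure_mono (Iio_subset_Iio h))

lemma Lf_le_Gf (s : ℝ) : Lf ν s ≤ Gf ν s :=
  ENNReal.toReal_mono (measure_ne_top _ _) (measure_mono Iio_subset_Iic_self)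

lemma Gf_le_Lf_of_lt {s t : ℝ} (h : s < t) : Gf ν s ≤ Lf ν t :=
  ENNReal.toReal_mono (measure_ne_top _ _) (measure_mono fun _ hx => lt_of_le_of_lt hx h)

omit [IsFiniteMeasure ν] in
lemma Gf_nonneg (s : ℝ) : 0 ≤ Gf ν s := ENNReal.toReal_nonneg

omit [IsFiniteMeasure ν] in
lemma Lf_nonneg (s : ℝ) : 0 ≤ Lf ν s := ENNReal.toReal_nonneg

lemma measurable_Tf : Measurable (Tf ν) := by
  have hG : Measurable (Gf ν) := (Gf_mono ν).measurable
  have hL : Measurable (Lf ν) := (Lf_mono ν).measurable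
  exact ((hL.comp measurable_fst).add
    (measurable_snd.mul ((hG.comp measurable_fst).sub (hL.comp measurable_fst))))

omit [IsFiniteMeasure ν] in
lemma Gf_le_one [IsProbabilityMeasure ν] (s : ℝ) : Gf ν s ≤ 1 := by
  have := prob_le_one (μ := ν) (s := Iic s)
  simpa [Gf] using ENNReal.toReal_mono (by simp) this

lemma Tf_le_Gf {p : ℝ × ℝ} (h0 : 0 ≤ p.2) (h1 : p.2 ≤ 1) : Tf ν p ≤ Gf ν p.1 := by
  have h := Lf_le_Gf ν p.1
  have : p.2 * (Gf ν p.1 - Lf ν p.1) ≤ Gf ν p.1 - Lf ν p.1 := by nlinarith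
  unfold Tf; linarith

lemma Lf_le_Tf {p : ℝ × ℝ} (h0 : 0 ≤ p.2) : Lf ν p.1 ≤ Tf ν p := by
  have h := Lf_le_Gf ν p.1
  have : 0 ≤ p.2 * (Gf ν p.1 - Lf ν p.1) := mul_nonneg h0 (by linarith)
  unfold Tf; linarith

omit [IsFiniteMeasure ν] in
lemma exists_null_superset (Z : Set ℝ) (f : ℝ → Set ℝ)
    (hfm : ∀ z ∈ Z, MeasurableSet (f z)) (hf0 : ∀ z ∈ Z, ν (f z) = 0)
    (hle : ∀ z ∈ Z, ∀ w ∈ Z, z ≤ w → z ∈ f w) :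
    ∃ N, MeasurableSet N ∧ ν N = 0 ∧ Z ⊆ N := by
  rcases Z.eq_empty_or_nonempty with rfl | hZ
  · exact ⟨∅, MeasurableSet.empty, by simp, by simp⟩
  by_cases hb : BddAbove Z
  · set c := sSup Z with hc
    by_cases hcZ : c ∈ Z
    · exact ⟨f c, hfm c hcZ, hf0 c hcZ, fun z hz => hle z hz c hcZ (le_csSup hb hz)⟩
    · have hex : ∀ n : ℕ, ∃ z, z ∈ Z ∧ c - 1 / (n + 1) < z := by
        intro n
        have hlt : c - 1 / (n + 1) < c := by
          have : (0:ℝ) < 1 / (n + 1) := by positivity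
          linarith
        obtain ⟨z, hzZ, hz⟩ := exists_lt_of_lt_csSup hZ hlt
        exact ⟨z, hzZ, hz⟩
      choose s hsZ hs using hex
      refine ⟨⋃ n, f (s n), MeasurableSet.iUnion (fun n => hfm _ (hsZ n)),
        measure_iUnion_null (fun n => hf0 _ (hsZ n)), fun z hz => ?_⟩
      have hzc : z < c := lt_of_le_of_ne (le_csSup hb hz) (fun h => hcZ (h ▸ hz))
      obtain ⟨n, hn⟩ := exists_nat_one_div_lt (show (0:ℝ) < c - z by linarith)
      have : z < s n := by have := hs n; linarith
      exact mem_iUnion.2 ⟨n, hle z hz (s n) (hsZ n) this.le⟩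
  · have hex : ∀ n : ℕ, ∃ z, z ∈ Z ∧ (n : ℝ) < z := by
      intro n
      rcases not_bddAbove_iff.1 hb (n : ℝ) with ⟨z, hzZ, hz⟩
      exact ⟨z, hzZ, hz⟩
    choose s hsZ hs using hex
    refine ⟨⋃ n, f (s n), MeasurableSet.iUnion (fun n => hfm _ (hsZ n)),
      measure_iUnion_null (fun n => hf0 _ (hsZ n)), fun z hz => ?_⟩
    obtain ⟨n, hn⟩ := exists_nat_gt z
    exact mem_iUnion.2 ⟨n, hle z hz (s n) (hsZ n) (le_of_lt (hn.trans (hs n)))⟩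

lemma flat_null (x : ℝ) :
    ∃ N, MeasurableSet N ∧ ν N = 0 ∧ {s | x < s ∧ ν (Iic s) = ν (Iic x)} ⊆ N := by
  apply exists_null_superset ν _ (fun z => Ioc x z)
  · exact fun z _ => measurableSet_Ioc
  · rintro z ⟨hxz, hz⟩
    have hsplit : ν (Iic x) + ν (Ioc x z) = ν (Iic z) := by
      rw [← measure_union (by
          rw [Set.disjoint_left]; rintro a ha ⟨h1, h2⟩; exact absurd h1 (not_lt.2 ha))
        measurableSet_Ioc, Iic_union_Ioc_eq_Iic hxz.le]
    rw [hz] at hsplit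
    have h0 : ν (Iic x) + ν (Ioc x z) = ν (Iic x) + 0 := by simpa using hsplit
    exact (ENNReal.add_right_inj (measure_ne_top ν (Iic x))).1 h0
  · rintro z ⟨hxz, _⟩ w ⟨_, _⟩ hzw
    exact ⟨hxz, hzw⟩

omit [IsFiniteMeasure ν] in
lemma zero_null :
    ∃ N, MeasurableSet N ∧ ν N = 0 ∧ {s | ν (Iic s) = 0} ⊆ N := by
  apply exists_null_superset ν _ (fun z => Iic z)
  · exact fun z _ => measurableSet_Iic
  · exact fun _ hz => hz
  · exact fun z _ w _ hzw => hzw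

lemma measure_Iic_eq_add (q : ℝ) : ν (Iic q) = ν (Iio q) + ν {q} := by
  rw [← measure_union (by simp [Set.disjoint_left]; exact fun a ha => ne_of_lt ha) (measurableSet_singleton q),
    Set.union_singleton, Iio_insert]

/-- The distributional transform is uniformly distributed. -/
lemma uniform [IsProbabilityMeasure ν] {u : ℝ} (hu0 : 0 ≤ u) (hu1 : u ≤ 1) :
    (ν.prod lam) {p : ℝ × ℝ | Tf ν p ≤ u} = ENNReal.ofReal u := by
  have hWm : MeasurableSet {p : ℝ × ℝ | Tf ν p ≤ u} :=
    measurableSet_le (measurable_Tf ν) measurable_const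
  rcases eq_or_lt_of_le hu1 with rfl | hu1
  · -- u = 1
    have hsub : (univ ×ˢ Icc (0:ℝ) 1 : Set (ℝ × ℝ)) ⊆ {p | Tf ν p ≤ 1} :=
      fun p hp => (Tf_le_Gf ν hp.2.1 hp.2.2).trans (Gf_le_one ν _)
    have h1 : (1:ℝ≥0∞) ≤ (ν.prod lam) {p : ℝ × ℝ | Tf ν p ≤ 1} := by
      calc (1:ℝ≥0∞) = (ν.prod lam) (univ ×ˢ Icc (0:ℝ) 1) := by
            rw [Measure.prod_prod, measure_univ, one_mul]
            rw [lam, Measure.restrict_apply measurableSet_Icc]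
            simp [Real.volume_Icc]
        _ ≤ _ := measure_mono hsub
    have h2 := prob_le_one (μ := ν.prod lam) (s := {p : ℝ × ℝ | Tf ν p ≤ 1})
    simp only [ENNReal.ofReal_one]
    exact le_antisymm h2 h1
  rcases eq_or_lt_of_le hu0 with rfl | hu0
  · -- u = 0
    obtain ⟨N₀, hNm, hN0, hNsub⟩ := zero_null ν
    have hsub : {p : ℝ × ℝ | Tf ν p ≤ 0} ⊆
        (N₀ ×ˢ univ) ∪ (univ ×ˢ ((Icc (0:ℝ) 1)ᶜ ∪ {0})) := by
      intro p hp
      by_cases ht : p.2 ∈ Icc (0:ℝ) 1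
      · by_cases ht0 : p.2 = 0
        · exact Or.inr ⟨mem_univ _, Or.inr ht0⟩
        · left
          refine ⟨hNsub ?_, mem_univ _⟩
          have hL0 : Lf ν p.1 = 0 :=
            le_antisymm ((Lf_le_Tf ν ht.1).trans hp) (Lf_nonneg ν _)
          have htpos : 0 < p.2 := lt_of_le_of_ne ht.1 (Ne.symm ht0)
          have hGL : 0 ≤ Gf ν p.1 - Lf ν p.1 := by linarith [Lf_le_Gf ν p.1]
          have hT : Tf ν p = Lf ν p.1 + p.2 * (Gf ν p.1 - Lf ν p.1) := rfl
          have hmul : p.2 * (Gf ν p.1 - Lf ν p.1) ≤ 0 := by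
            have h' := hp; rw [Set.mem_setOf_eq, hT] at h'
            rw [hL0] at h' ⊢; linarith
          have hG0 : Gf ν p.1 = 0 := by
            rcases mul_nonpos_iff.1 hmul with ⟨h1, h2⟩ | ⟨h1, h2⟩
            · linarith
            · linarith [Gf_nonneg ν p.1]
          show ν (Iic p.1) = 0
          have := (ENNReal.toReal_eq_zero_iff _).1 hG0
          exact this.resolve_right (measure_ne_top ν _)
      · exact Or.inr ⟨mem_univ _, Or.inl ht⟩
    have hle : (ν.prod lam) {p : ℝ × ℝ | Tf ν p ≤ 0} = 0 := by
      refine le_antisymm (le_trans (measure_mono hsub) ?_) zero_le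
      refine le_trans (measure_union_le _ _) ?_
      have e1 : (ν.prod lam) (N₀ ×ˢ univ) = 0 := by
        rw [Measure.prod_prod, hN0, zero_mul]
      have e2 : (ν.prod lam) (univ ×ˢ ((Icc (0:ℝ) 1)ᶜ ∪ {0})) = 0 := by
        rw [Measure.prod_prod]
        have : lam ((Icc (0:ℝ) 1)ᶜ ∪ {0}) = 0 := by
          refine le_antisymm (le_trans (measure_union_le _ _) ?_) zero_le
          rw [lam_compl_Icc, lam_singleton]; simp
        rw [this, mul_zero]
      rw [e1, e2]; simp
    rw [hle]; simp
  -- 0 < u < 1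
  set S : Set ℝ := {t | u ≤ Gf ν t} with hS
  have hS_ne : S.Nonempty := by
    have ht := tendsto_measure_Iic_atTop (μ := ν)
    rw [measure_univ] at ht
    have hev : ∀ᶠ x : ℝ in atTop, ν (Iic x) ∈ Ioi (ENNReal.ofReal u) :=
      ht (isOpen_Ioi.mem_nhds (ENNReal.ofReal_lt_one.2 hu1))
    obtain ⟨x, hx⟩ := hev.exists
    refine ⟨x, ?_⟩
    have : u = (ENNReal.ofReal u).toReal := (ENNReal.toReal_ofReal hu0.le).symm
    rw [hS]; simp only [Set.mem_setOf_eq]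
    rw [this]
    exact ENNReal.toReal_mono (measure_ne_top _ _) (le_of_lt hx)
  have hbdd : BddBelow S := by
    have hanti : Antitone (fun n : ℕ => Iic (-(n:ℝ))) := fun n m hnm => by
      apply Iic_subset_Iic.2; simp; exact_mod_cast hnm
    have hempty : ⋂ n : ℕ, Iic (-(n:ℝ)) = (∅ : Set ℝ) := by
      ext x; simp only [mem_iInter, mem_Iic, mem_empty_iff_false, iff_false, not_forall]
      obtain ⟨n, hn⟩ := exists_nat_gt (-x)
      exact ⟨n, by push_neg; linarith⟩
    have ht := tendsto_measure_iInter_atTop (μ := ν)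
      (fun n => measurableSet_Iic.nullMeasurableSet) hanti ⟨0, measure_ne_top ν _⟩
    rw [hempty, measure_empty] at ht
    have hev : ∀ᶠ n : ℕ in atTop, ν (Iic (-(n:ℝ))) ∈ Iio (ENNReal.ofReal u) :=
      ht (isOpen_Iio.mem_nhds (ENNReal.ofReal_pos.2 hu0))
    obtain ⟨n, hn⟩ := hev.exists
    refine ⟨-(n:ℝ), fun t htS => ?_⟩
    by_contra hlt
    push_neg at hlt
    have h1 : Gf ν t ≤ Gf ν (-(n:ℝ)) := Gf_mono ν hlt.le
    have h2 : Gf ν (-(n:ℝ)) < u := ENNReal.toReal_lt_of_lt_ofReal hn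
    exact absurd (htS.trans h1) (not_le.2 h2)
  set q := sInf S with hq
  have hq1 : ∀ t, t < q → Gf ν t < u := by
    intro t ht
    by_contra h
    push_neg at h
    exact absurd (csInf_le hbdd h) (not_le.2 ht)
  have hq2 : u ≤ Gf ν q := by
    have hanti : Antitone (fun n : ℕ => Iic (q + 1/((n:ℝ)+1))) := by
      intro n m hnm
      apply Iic_subset_Iic.2
      have : 1/((m:ℝ)+1) ≤ 1/((n:ℝ)+1) := by
        apply one_div_le_one_div_of_le (by positivity)
        have := (Nat.cast_le (α := ℝ)).2 hnm; linarith
      linarith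
    have hiInter : ⋂ n : ℕ, Iic (q + 1/((n:ℝ)+1)) = Iic q := by
      ext x
      simp only [mem_iInter, mem_Iic]
      constructor
      · intro h
        by_contra hx
        push_neg at hx
        obtain ⟨n, hn⟩ := exists_nat_one_div_lt (show (0:ℝ) < x - q by linarith)
        have := h n; linarith
      · intro h n
        have : (0:ℝ) < 1/((n:ℝ)+1) := by positivity
        linarith
    have ht := tendsto_measure_iInter_atTop (μ := ν)
      (fun n => measurableSet_Iic.nullMeasurableSet) hanti ⟨0, measure_ne_top ν _⟩
    rw [hiInter] at ht
    have hev : ∀ n : ℕ, ENNReal.ofReal u ≤ ν (Iic (q + 1/((n:ℝ)+1))) := by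
      intro n
      have hlt : q < q + 1/((n:ℝ)+1) := by
        have : (0:ℝ) < 1/((n:ℝ)+1) := by positivity
        linarith
      obtain ⟨s, hsS, hs⟩ := (csInf_lt_iff hbdd hS_ne).1 hlt
      have h1 : ENNReal.ofReal u ≤ ν (Iic s) := by
        rw [← ENNReal.ofReal_toReal (measure_ne_top ν (Iic s))]
        exact ENNReal.ofReal_le_ofReal hsS
      exact h1.trans (measure_mono (Iic_subset_Iic.2 hs.le))
    have hle := ge_of_tendsto ht (Eventually.of_forall hev)
    have := ENNReal.toReal_mono (measure_ne_top ν _) hle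
    rwa [ENNReal.toReal_ofReal hu0.le] at this
  have hq3 : Lf ν q ≤ u := by
    have hmono : Monotone (fun n : ℕ => Iic (q - 1/((n:ℝ)+1))) := by
      intro n m hnm
      apply Iic_subset_Iic.2
      have : 1/((m:ℝ)+1) ≤ 1/((n:ℝ)+1) := by
        apply one_div_le_one_div_of_le (by positivity)
        have := (Nat.cast_le (α := ℝ)).2 hnm; linarith
      linarith
    have hiUnion : ⋃ n : ℕ, Iic (q - 1/((n:ℝ)+1)) = Iio q := by
      ext x
      simp only [mem_iUnion, mem_Iic, mem_Iio]
      constructor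
      · rintro ⟨n, hn⟩
        have : (0:ℝ) < 1/((n:ℝ)+1) := by positivity
        linarith
      · intro h
        obtain ⟨n, hn⟩ := exists_nat_one_div_lt (show (0:ℝ) < q - x by linarith)
        exact ⟨n, by linarith⟩
    have ht := tendsto_measure_iUnion_atTop (μ := ν) hmono
    rw [hiUnion] at ht
    have hev : ∀ n : ℕ, ν (Iic (q - 1/((n:ℝ)+1))) ≤ ENNReal.ofReal u := by
      intro n
      have hlt : q - 1/((n:ℝ)+1) < q := by
        have : (0:ℝ) < 1/((n:ℝ)+1) := by positivity
        linarith
      exact (ENNReal.le_ofReal_iff_toReal_le (measure_ne_top _ _) hu0.le).2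
        (le_of_lt (hq1 _ hlt))
    have hle := le_of_tendsto ht (Eventually.of_forall hev)
    have := ENNReal.toReal_mono ENNReal.ofReal_ne_top hle
    rwa [ENNReal.toReal_ofReal hu0.le] at this
  -- the bad null set
  obtain ⟨N, hNm, hN0, hNsub⟩ := flat_null ν q
  set E : Set (ℝ × ℝ) := (N ×ˢ univ) ∪ (univ ×ˢ ((Icc (0:ℝ) 1)ᶜ ∪ {0})) with hE
  have hEm : MeasurableSet E :=
    (hNm.prod MeasurableSet.univ).union
      (MeasurableSet.univ.prod ((measurableSet_Icc.compl).union (measurableSet_singleton 0)))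
  have hE0 : (ν.prod lam) E = 0 := by
    refine le_antisymm (le_trans (measure_union_le _ _) ?_) zero_le
    have e1 : (ν.prod lam) (N ×ˢ univ) = 0 := by rw [Measure.prod_prod, hN0, zero_mul]
    have e2 : (ν.prod lam) (univ ×ˢ ((Icc (0:ℝ) 1)ᶜ ∪ {0})) = 0 := by
      rw [Measure.prod_prod]
      have : lam ((Icc (0:ℝ) 1)ᶜ ∪ {0}) = 0 := by
        refine le_antisymm (le_trans (measure_union_le _ _) ?_) zero_le
        rw [lam_compl_Icc, lam_singleton]; simp
      rw [this, mul_zero]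
    rw [e1, e2]; simp
  set W : Set (ℝ × ℝ) := {p | Tf ν p ≤ u} with hW
  set TT : Set ℝ := {t | Lf ν q + t * (Gf ν q - Lf ν q) ≤ u} with hTT
  have hTTm : MeasurableSet TT :=
    measurableSet_le (by fun_prop) measurable_const
  -- the three pieces
  have h3 : (W \ E) ∩ {p : ℝ × ℝ | q < p.1} = ∅ := by
    ext p
    simp only [mem_inter_iff, mem_diff, mem_empty_iff_false, iff_false, not_and, and_imp]
    intro hpW hpE hpq
    exfalso
    have htIcc : p.2 ∈ Icc (0:ℝ) 1 := by
      by_contra h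
      exact hpE (Or.inr ⟨mem_univ _, Or.inl h⟩)
    have ht0 : p.2 ≠ 0 := by
      intro h
      exact hpE (Or.inr ⟨mem_univ _, Or.inr h⟩)
    have hpN : p.1 ∉ N := fun h => hpE (Or.inl ⟨h, mem_univ _⟩)
    have hLge : u ≤ Lf ν p.1 := hq2.trans (Gf_le_Lf_of_lt ν hpq)
    have hTle : Tf ν p ≤ u := hpW
    have hLT := Lf_le_Tf ν (p := p) htIcc.1
    have hLeq : Lf ν p.1 = u := le_antisymm (by linarith) hLge
    have hmul : p.2 * (Gf ν p.1 - Lf ν p.1) = 0 := by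
      have h1 : Tf ν p = Lf ν p.1 + p.2 * (Gf ν p.1 - Lf ν p.1) := rfl
      have h2 : 0 ≤ p.2 * (Gf ν p.1 - Lf ν p.1) :=
        mul_nonneg htIcc.1 (by linarith [Lf_le_Gf ν p.1])
      rw [h1] at hTle
      linarith
    have htpos : 0 < p.2 := lt_of_le_of_ne htIcc.1 (Ne.symm ht0)
    have hGeq : Gf ν p.1 = Lf ν p.1 := by
      rcases mul_eq_zero.1 hmul with h | h
      · exact absurd h ht0
      · linarith
    -- then ν (Iic p.1) = ν (Iic q), so p.1 ∈ flat set ⊆ N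
    have hGq : Gf ν p.1 = Gf ν q := by
      have h1 : Gf ν q ≤ Lf ν p.1 := Gf_le_Lf_of_lt ν hpq
      have h2 : Gf ν q ≥ u := hq2
      linarith [hLeq, hGeq]
    have : ν (Iic p.1) = ν (Iic q) :=
      (ENNReal.toReal_eq_toReal_iff' (measure_ne_top _ _) (measure_ne_top _ _)).1 hGq
    exact hpN (hNsub ⟨hpq, this⟩)
  have h1' : (W \ E) ∩ {p : ℝ × ℝ | p.1 < q} = {p : ℝ × ℝ | p.1 < q} \ E := by
    ext p
    simp only [mem_inter_iff, mem_diff, Set.mem_setOf_eq]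
    constructor
    · rintro ⟨⟨h1, h2⟩, h3⟩; exact ⟨h3, h2⟩
    · rintro ⟨h1, h2⟩
      refine ⟨⟨?_, h2⟩, h1⟩
      have htIcc : p.2 ∈ Icc (0:ℝ) 1 := by
        by_contra h
        exact h2 (Or.inr ⟨mem_univ _, Or.inl h⟩)
      have : Tf ν p ≤ Gf ν p.1 := Tf_le_Gf ν htIcc.1 htIcc.2
      exact this.trans (le_of_lt (hq1 _ h1))
  have h2' : (W \ E) ∩ {p : ℝ × ℝ | p.1 = q} = ({q} ×ˢ TT) \ E := by
    ext p
    simp only [mem_inter_iff, mem_diff, Set.mem_setOf_eq, mem_prod, mem_singleton_iff]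
    constructor
    · rintro ⟨⟨h1, h2⟩, h3⟩
      refine ⟨⟨h3, ?_⟩, h2⟩
      have h1'' : Lf ν p.1 + p.2 * (Gf ν p.1 - Lf ν p.1) ≤ u := h1
      rw [h3] at h1''
      exact h1''
    · rintro ⟨⟨h1, h2⟩, h3⟩
      refine ⟨⟨?_, h3⟩, h1⟩
      show Lf ν p.1 + p.2 * (Gf ν p.1 - Lf ν p.1) ≤ u
      rw [h1]
      exact h2
  have hsplit : W \ E = (({p : ℝ × ℝ | p.1 < q} \ E) ∪ (({q} ×ˢ TT) \ E)) := by
    have : W \ E = ((W \ E) ∩ {p : ℝ × ℝ | p.1 < q}) ∪ ((W \ E) ∩ {p : ℝ × ℝ | p.1 = q})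
        ∪ ((W \ E) ∩ {p : ℝ × ℝ | q < p.1}) := by
      ext p
      simp only [mem_union, mem_inter_iff, Set.mem_setOf_eq]
      constructor
      · intro h
        rcases lt_trichotomy p.1 q with hh | hh | hh
        · exact Or.inl (Or.inl ⟨h, hh⟩)
        · exact Or.inl (Or.inr ⟨h, hh⟩)
        · exact Or.inr ⟨h, hh⟩
      · rintro ((⟨h, _⟩ | ⟨h, _⟩) | ⟨h, _⟩) <;> exact h
    rw [this, h1', h2', h3, union_empty]
  have hmeasW : (ν.prod lam) W = ν (Iio q) + ν {q} * lam TT := by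
    rw [← measure_diff_null (s := W) hE0, hsplit]
    rw [measure_union ?hdisj ((measurableSet_singleton q).prod hTTm |>.diff hEm)]
    case hdisj =>
      rw [Set.disjoint_left]
      rintro p ⟨hp1, _⟩ ⟨⟨hp2, _⟩, _⟩
      rw [Set.mem_setOf_eq] at hp1
      exact absurd hp2 (ne_of_lt hp1)
    rw [measure_diff_null hE0, measure_diff_null hE0]
    have e1 : {p : ℝ × ℝ | p.1 < q} = (Iio q) ×ˢ (univ : Set ℝ) := by
      ext p; simp [mem_prod]
    rw [e1, Measure.prod_prod, Measure.prod_prod, measure_univ, mul_one]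
  -- now compute
  by_cases hq0 : ν {q} = 0
  · have hIic := measure_Iic_eq_add ν q
    rw [hq0, add_zero] at hIic
    have hGL : Gf ν q = Lf ν q := by rw [Gf, Lf, hIic]
    have huL : u = Lf ν q := le_antisymm (hGL ▸ hq2) hq3
    rw [hmeasW, hq0, zero_mul, add_zero, huL, Lf,
      ENNReal.ofReal_toReal (measure_ne_top _ _)]
  · have hΔpos : 0 < (ν {q}).toReal := ENNReal.toReal_pos hq0 (measure_ne_top _ _)
    have hGL : Gf ν q = Lf ν q + (ν {q}).toReal := by
      rw [Gf, Lf, measure_Iic_eq_add ν q,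
        ENNReal.toReal_add (measure_ne_top _ _) (measure_ne_top _ _)]
    set Δ := (ν {q}).toReal with hΔ
    set r := (u - Lf ν q) / Δ with hr
    have hr0 : 0 ≤ r := div_nonneg (by linarith) hΔpos.le
    have hr1 : r ≤ 1 := by
      rw [hr, div_le_one hΔpos]
      linarith [hq2, hGL]
    have hTTr : TT = Iic r := by
      ext t
      rw [hTT, hr]
      simp only [Set.mem_setOf_eq, mem_Iic]
      rw [hGL]
      constructor
      · intro h
        rw [le_div_iff₀ hΔpos]
        linarith
      · intro h
        rw [le_div_iff₀ hΔpos] at h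
        linarith
    have hlamTT : lam TT = ENNReal.ofReal r := by
      rw [hTTr, lam, Measure.restrict_apply measurableSet_Iic]
      have : Iic r ∩ Icc (0:ℝ) 1 = Icc (0:ℝ) r := by
        ext t
        simp only [mem_inter_iff, mem_Iic, mem_Icc]
        constructor
        · rintro ⟨h1, h2, h3⟩; exact ⟨h2, h1⟩
        · rintro ⟨h1, h2⟩; exact ⟨h2, h1, h2.trans hr1⟩
      rw [this, Real.volume_Icc, sub_zero]
    have hprod : ν {q} * lam TT = ENNReal.ofReal (u - Lf ν q) := by
      rw [hlamTT, ← ENNReal.ofReal_toReal (measure_ne_top ν {q}), ← hΔ,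
        ← ENNReal.ofReal_mul hΔpos.le]
      congr 1
      rw [hr]
      field_simp
    rw [hmeasW, hprod]
    have hLu : u - Lf ν q = u - (ν (Iio q)).toReal := by rw [Lf]
    rw [hLu]
    nth_rewrite 1 [← ENNReal.ofReal_toReal (measure_ne_top ν (Iio q))]
    rw [← ENNReal.ofReal_add ENNReal.toReal_nonneg
      (by rw [← hLu]; linarith [hq3] : (0:ℝ) ≤ u - (ν (Iio q)).toReal)]
    congr 1
    ring


/-- Off a null set, the event `Tf ≤ Gf x` coincides with the event `p.1 ≤ x`. -/
lemma ae_event [IsProbabilityMeasure ν] (x : ℝ) :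
    ∃ E : Set (ℝ × ℝ), MeasurableSet E ∧ (ν.prod lam) E = 0 ∧
      ∀ p : ℝ × ℝ, p ∉ E → (Tf ν p ≤ Gf ν x ↔ p.1 ≤ x) := by
  obtain ⟨N, hNm, hN0, hNsub⟩ := flat_null ν x
  refine ⟨(N ×ˢ univ) ∪ (univ ×ˢ ((Icc (0:ℝ) 1)ᶜ ∪ {0})),
    (hNm.prod MeasurableSet.univ).union
      (MeasurableSet.univ.prod ((measurableSet_Icc.compl).union (measurableSet_singleton 0))),
    ?_, ?_⟩
  · refine le_antisymm (le_trans (measure_union_le _ _) ?_) zero_le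
    have e1 : (ν.prod lam) (N ×ˢ univ) = 0 := by rw [Measure.prod_prod, hN0, zero_mul]
    have e2 : (ν.prod lam) (univ ×ˢ ((Icc (0:ℝ) 1)ᶜ ∪ {0})) = 0 := by
      rw [Measure.prod_prod]
      have : lam ((Icc (0:ℝ) 1)ᶜ ∪ {0}) = 0 := by
        refine le_antisymm (le_trans (measure_union_le _ _) ?_) zero_le
        rw [lam_compl_Icc, lam_singleton]; simp
      rw [this, mul_zero]
    rw [e1, e2]; simp
  · intro p hp
    have htIcc : p.2 ∈ Icc (0:ℝ) 1 := by
      by_contra h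
      exact hp (Or.inr ⟨mem_univ _, Or.inl h⟩)
    have ht0 : p.2 ≠ 0 := fun h => hp (Or.inr ⟨mem_univ _, Or.inr h⟩)
    have hpN : p.1 ∉ N := fun h => hp (Or.inl ⟨h, mem_univ _⟩)
    constructor
    · intro hT
      by_contra hgt
      push_neg at hgt
      have hLge : Gf ν x ≤ Lf ν p.1 := Gf_le_Lf_of_lt ν hgt
      have hLT := Lf_le_Tf ν (p := p) htIcc.1
      have hLeq : Lf ν p.1 = Gf ν x := le_antisymm (by linarith) hLge
      have hmul : p.2 * (Gf ν p.1 - Lf ν p.1) = 0 := by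
        have h1 : Tf ν p = Lf ν p.1 + p.2 * (Gf ν p.1 - Lf ν p.1) := rfl
        have h2 : 0 ≤ p.2 * (Gf ν p.1 - Lf ν p.1) :=
          mul_nonneg htIcc.1 (by linarith [Lf_le_Gf ν p.1])
        rw [h1] at hT
        linarith
      have hGeq : Gf ν p.1 = Gf ν x := by
        rcases mul_eq_zero.1 hmul with h | h
        · exact absurd h ht0
        · linarith [hLeq]
      have : ν (Iic p.1) = ν (Iic x) :=
        (ENNReal.toReal_eq_toReal_iff' (measure_ne_top _ _) (measure_ne_top _ _)).1 hGeq
      exact hpN (hNsub ⟨hgt, this⟩)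
    · intro hle
      exact (Tf_le_Gf ν htIcc.1 htIcc.2).trans (Gf_mono ν hle)

end SklarProof
end

open SklarProof

/-- A bivariate copula: a function `C : [0,1]² → [0,1]` (here defined on all of `ℝ²`,
with the copula properties required on `[0,1]²`) with uniform margins and which is
2-increasing. -/
def IsCopula (C : ℝ → ℝ → ℝ) : Prop :=
  (∀ u ∈ Icc (0:ℝ) 1, ∀ v ∈ Icc (0:ℝ) 1, C u v ∈ Icc (0:ℝ) 1) ∧
  (∀ u ∈ Icc (0:ℝ) 1, C u 0 = 0) ∧
  (∀ v ∈ Icc (0:ℝ) 1, C 0 v = 0) ∧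
  (∀ u ∈ Icc (0:ℝ) 1, C u 1 = u) ∧
  (∀ v ∈ Icc (0:ℝ) 1, C 1 v = v) ∧
  (∀ u₁ ∈ Icc (0:ℝ) 1, ∀ u₂ ∈ Icc (0:ℝ) 1, ∀ v₁ ∈ Icc (0:ℝ) 1, ∀ v₂ ∈ Icc (0:ℝ) 1,
    u₁ ≤ u₂ → v₁ ≤ v₂ → 0 ≤ C u₂ v₂ - C u₁ v₂ - C u₂ v₁ + C u₁ v₁)

/-- **Sklar's theorem (existence and uniqueness).**
Let `(X,Y)` be a bivariate random variable, described by a probability measure `μ` on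
`ℝ × ℝ`, with joint cdf `F x y = μ {p | p.1 ≤ x ∧ p.2 ≤ y}` and marginal cdfs
`FX x = μ {p | p.1 ≤ x}`, `FY y = μ {p | p.2 ≤ y}`. Then there exists a copula `C`
with `F x y = C (FX x) (FY y)` for all `x y`; moreover, if `FX` and `FY` are
continuous then such a copula is unique on `[0,1]²`. -/
theorem sklar_existence_and_uniqueness
    (μ : Measure (ℝ × ℝ)) [IsProbabilityMeasure μ]
    (F : ℝ → ℝ → ℝ) (FX FY : ℝ → ℝ)
    (hF : ∀ x y : ℝ, F x y = (μ {p : ℝ × ℝ | p.1 ≤ x ∧ p.2 ≤ y}).toReal)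
    (hFX : ∀ x : ℝ, FX x = (μ {p : ℝ × ℝ | p.1 ≤ x}).toReal)
    (hFY : ∀ y : ℝ, FY y = (μ {p : ℝ × ℝ | p.2 ≤ y}).toReal) :
    (∃ C : ℝ → ℝ → ℝ, IsCopula C ∧ ∀ x y : ℝ, F x y = C (FX x) (FY y)) ∧
    (Continuous FX → Continuous FY →
      ∀ C₁ C₂ : ℝ → ℝ → ℝ, IsCopula C₁ → IsCopula C₂ →
        (∀ x y : ℝ, F x y = C₁ (FX x) (FY y)) →
        (∀ x y : ℝ, F x y = C₂ (FX x) (FY y)) →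
        ∀ u ∈ Icc (0:ℝ) 1, ∀ v ∈ Icc (0:ℝ) 1, C₁ u v = C₂ u v) := by
  classical
  constructor
  · -- Existence
    set ν₁ : Measure ℝ := μ.map Prod.fst with hν₁
    set ν₂ : Measure ℝ := μ.map Prod.snd with hν₂
    haveI : IsProbabilityMeasure ν₁ := Measure.isProbabilityMeasure_map measurable_fst.aemeasurable
    haveI : IsProbabilityMeasure ν₂ := Measure.isProbabilityMeasure_map measurable_snd.aemeasurable
    set P : Measure ((ℝ × ℝ) × ℝ) := μ.prod lam with hP
    haveI : IsProbabilityMeasure P := by rw [hP]; infer_instance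
    have hmp₁ : MeasurePreserving (Prod.map (Prod.fst : ℝ × ℝ → ℝ) (id : ℝ → ℝ)) P
        (ν₁.prod lam) :=
      (⟨measurable_fst, rfl⟩ : MeasurePreserving Prod.fst μ ν₁).prod (MeasurePreserving.id _)
    have hmp₂ : MeasurePreserving (Prod.map (Prod.snd : ℝ × ℝ → ℝ) (id : ℝ → ℝ)) P
        (ν₂.prod lam) :=
      (⟨measurable_snd, rfl⟩ : MeasurePreserving Prod.snd μ ν₂).prod (MeasurePreserving.id _)
    set U₁ : (ℝ × ℝ) × ℝ → ℝ := fun ω => Tf ν₁ (ω.1.1, ω.2) with hU₁def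
    set U₂ : (ℝ × ℝ) × ℝ → ℝ := fun ω => Tf ν₂ (ω.1.2, ω.2) with hU₂def
    have hU₁m : Measurable U₁ :=
      (measurable_Tf ν₁).comp ((measurable_fst.comp measurable_fst).prodMk measurable_snd)
    have hU₂m : Measurable U₂ :=
      (measurable_Tf ν₂).comp ((measurable_snd.comp measurable_fst).prodMk measurable_snd)
    have hA₁m : ∀ u : ℝ, MeasurableSet {ω : (ℝ × ℝ) × ℝ | U₁ ω ≤ u} :=
      fun u => measurableSet_le hU₁m measurable_const
    have hA₂m : ∀ v : ℝ, MeasurableSet {ω : (ℝ × ℝ) × ℝ | U₂ ω ≤ v} :=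
      fun v => measurableSet_le hU₂m measurable_const
    have htrans₁ : ∀ u : ℝ, P {ω | U₁ ω ≤ u} = (ν₁.prod lam) {p | Tf ν₁ p ≤ u} := by
      intro u
      have : {ω : (ℝ × ℝ) × ℝ | U₁ ω ≤ u} =
          (Prod.map (Prod.fst : ℝ × ℝ → ℝ) (id : ℝ → ℝ)) ⁻¹' {p | Tf ν₁ p ≤ u} := rfl
      rw [this]
      exact hmp₁.measure_preimage
        ((measurableSet_le (measurable_Tf ν₁) measurable_const).nullMeasurableSet)
    have htrans₂ : ∀ v : ℝ, P {ω | U₂ ω ≤ v} = (ν₂.prod lam) {p | Tf ν₂ p ≤ v} := by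
      intro v
      have : {ω : (ℝ × ℝ) × ℝ | U₂ ω ≤ v} =
          (Prod.map (Prod.snd : ℝ × ℝ → ℝ) (id : ℝ → ℝ)) ⁻¹' {p | Tf ν₂ p ≤ v} := rfl
      rw [this]
      exact hmp₂.measure_preimage
        ((measurableSet_le (measurable_Tf ν₂) measurable_const).nullMeasurableSet)
    have hunif₁ : ∀ u : ℝ, 0 ≤ u → u ≤ 1 → P {ω | U₁ ω ≤ u} = ENNReal.ofReal u := by
      intro u h0 h1; rw [htrans₁ u]; exact uniform ν₁ h0 h1
    have hunif₂ : ∀ v : ℝ, 0 ≤ v → v ≤ 1 → P {ω | U₂ ω ≤ v} = ENNReal.ofReal v := by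
      intro v h0 h1; rw [htrans₂ v]; exact uniform ν₂ h0 h1
    have hFXG : ∀ x, FX x = Gf ν₁ x := by
      intro x
      rw [hFX, Gf, hν₁, Measure.map_apply measurable_fst measurableSet_Iic]
      rfl
    have hFYG : ∀ y, FY y = Gf ν₂ y := by
      intro y
      rw [hFY, Gf, hν₂, Measure.map_apply measurable_snd measurableSet_Iic]
      rfl
    -- the bad set where the auxiliary coordinate is outside [0,1]
    set Bad : Set ((ℝ × ℝ) × ℝ) := (univ : Set (ℝ × ℝ)) ×ˢ (Icc (0:ℝ) 1)ᶜ with hBadDef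
    have hBad0 : P Bad = 0 := by
      rw [hP, hBadDef, Measure.prod_prod, lam_compl_Icc, mul_zero]
    have hBadU₂ : ∀ ω : (ℝ × ℝ) × ℝ, ω ∉ Bad → U₂ ω ≤ 1 := by
      intro ω hω
      have hIcc : ω.2 ∈ Icc (0:ℝ) 1 := by
        by_contra h; exact hω ⟨mem_univ _, h⟩
      exact (Tf_le_Gf ν₂ hIcc.1 hIcc.2).trans (Gf_le_one ν₂ _)
    have hBadU₁ : ∀ ω : (ℝ × ℝ) × ℝ, ω ∉ Bad → U₁ ω ≤ 1 := by
      intro ω hω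
      have hIcc : ω.2 ∈ Icc (0:ℝ) 1 := by
        by_contra h; exact hω ⟨mem_univ _, h⟩
      exact (Tf_le_Gf ν₁ hIcc.1 hIcc.2).trans (Gf_le_one ν₁ _)
    refine ⟨fun u v => (P {ω | U₁ ω ≤ u ∧ U₂ ω ≤ v}).toReal, ⟨?_, ?_, ?_, ?_, ?_, ?_⟩, ?_⟩
    · -- range in [0,1]
      intro u _ v _
      constructor
      · exact ENNReal.toReal_nonneg
      · have h := prob_le_one (μ := P) (s := {ω | U₁ ω ≤ u ∧ U₂ ω ≤ v})
        have := ENNReal.toReal_mono ENNReal.one_ne_top h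
        simpa using this
    · -- C u 0 = 0
      intro u _
      show (P {ω | U₁ ω ≤ u ∧ U₂ ω ≤ (0:ℝ)}).toReal = 0
      have hle : P {ω | U₁ ω ≤ u ∧ U₂ ω ≤ 0} ≤ P {ω | U₂ ω ≤ 0} :=
        measure_mono (fun ω h => h.2)
      rw [hunif₂ 0 le_rfl zero_le_one] at hle
      simp only [ENNReal.ofReal_zero, le_zero_iff] at hle
      rw [hle]; simp
    · -- C 0 v = 0
      intro v _
      show (P {ω | U₁ ω ≤ (0:ℝ) ∧ U₂ ω ≤ v}).toReal = 0
      have hle : P {ω | U₁ ω ≤ 0 ∧ U₂ ω ≤ v} ≤ P {ω | U₁ ω ≤ 0} :=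
        measure_mono (fun ω h => h.1)
      rw [hunif₁ 0 le_rfl zero_le_one] at hle
      simp only [ENNReal.ofReal_zero, le_zero_iff] at hle
      rw [hle]; simp
    · -- C u 1 = u
      intro u hu
      show (P {ω | U₁ ω ≤ u ∧ U₂ ω ≤ (1:ℝ)}).toReal = u
      have hae : {ω | U₁ ω ≤ u ∧ U₂ ω ≤ 1} =ᵐ[P] {ω | U₁ ω ≤ u} := by
        rw [Filter.eventuallyEq_set]
        filter_upwards [(measure_eq_zero_iff_ae_notMem (μ := P)).1 hBad0] with ω hω
        exact ⟨fun h => h.1, fun h => ⟨h, hBadU₂ ω hω⟩⟩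
      rw [measure_congr hae, hunif₁ u hu.1 hu.2, ENNReal.toReal_ofReal hu.1]
    · -- C 1 v = v
      intro v hv
      show (P {ω | U₁ ω ≤ (1:ℝ) ∧ U₂ ω ≤ v}).toReal = v
      have hae : {ω | U₁ ω ≤ 1 ∧ U₂ ω ≤ v} =ᵐ[P] {ω | U₂ ω ≤ v} := by
        rw [Filter.eventuallyEq_set]
        filter_upwards [(measure_eq_zero_iff_ae_notMem (μ := P)).1 hBad0] with ω hω
        exact ⟨fun h => h.2, fun h => ⟨hBadU₁ ω hω, h⟩⟩
      rw [measure_congr hae, hunif₂ v hv.1 hv.2, ENNReal.toReal_ofReal hv.1]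
    · -- 2-increasing
      intro u₁ _ u₂ _ v₁ _ v₂ _ hu hv
      show 0 ≤ (P {ω | U₁ ω ≤ u₂ ∧ U₂ ω ≤ v₂}).toReal -
        (P {ω | U₁ ω ≤ u₁ ∧ U₂ ω ≤ v₂}).toReal -
        (P {ω | U₁ ω ≤ u₂ ∧ U₂ ω ≤ v₁}).toReal +
        (P {ω | U₁ ω ≤ u₁ ∧ U₂ ω ≤ v₁}).toReal
      have hsub₁ : {ω : (ℝ × ℝ) × ℝ | U₁ ω ≤ u₁} ⊆ {ω | U₁ ω ≤ u₂} :=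
        fun ω h => le_trans h hu
      have hsub₂ : {ω : (ℝ × ℝ) × ℝ | U₂ ω ≤ v₁} ⊆ {ω | U₂ ω ≤ v₂} :=
        fun ω h => le_trans h hv
      have hkey : ∀ v : ℝ, {ω : (ℝ × ℝ) × ℝ | U₁ ω ≤ u₂ ∧ U₂ ω ≤ v} =
          {ω | U₁ ω ≤ u₁ ∧ U₂ ω ≤ v} ∪
            (({ω | U₁ ω ≤ u₂} \ {ω | U₁ ω ≤ u₁}) ∩ {ω | U₂ ω ≤ v}) := by
        intro v
        ext ω
        simp only [mem_union, mem_inter_iff, mem_diff, Set.mem_setOf_eq]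
        constructor
        · rintro ⟨h1, h2⟩
          by_cases h : U₁ ω ≤ u₁
          · exact Or.inl ⟨h, h2⟩
          · exact Or.inr ⟨⟨h1, h⟩, h2⟩
        · rintro (⟨h1, h2⟩ | ⟨⟨h1, _⟩, h2⟩)
          · exact ⟨h1.trans hu, h2⟩
          · exact ⟨h1, h2⟩
      have hdisj : ∀ v : ℝ, Disjoint {ω : (ℝ × ℝ) × ℝ | U₁ ω ≤ u₁ ∧ U₂ ω ≤ v}
          (({ω | U₁ ω ≤ u₂} \ {ω | U₁ ω ≤ u₁}) ∩ {ω | U₂ ω ≤ v}) := by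
        intro v
        rw [Set.disjoint_left]
        rintro ω ⟨h1, _⟩ ⟨⟨_, h2⟩, _⟩
        exact h2 h1
      have hm : ∀ v : ℝ, MeasurableSet
          (({ω : (ℝ × ℝ) × ℝ | U₁ ω ≤ u₂} \ {ω | U₁ ω ≤ u₁}) ∩ {ω | U₂ ω ≤ v}) :=
        fun v => (((hA₁m u₂).diff (hA₁m u₁)).inter (hA₂m v))
      have he₂ : (P {ω | U₁ ω ≤ u₂ ∧ U₂ ω ≤ v₂}).toReal =
          (P {ω | U₁ ω ≤ u₁ ∧ U₂ ω ≤ v₂}).toReal +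
          (P (({ω | U₁ ω ≤ u₂} \ {ω | U₁ ω ≤ u₁}) ∩ {ω | U₂ ω ≤ v₂})).toReal := by
        rw [hkey v₂, measure_union (hdisj v₂) (hm v₂),
          ENNReal.toReal_add (measure_ne_top _ _) (measure_ne_top _ _)]
      have he₁ : (P {ω | U₁ ω ≤ u₂ ∧ U₂ ω ≤ v₁}).toReal =
          (P {ω | U₁ ω ≤ u₁ ∧ U₂ ω ≤ v₁}).toReal +
          (P (({ω | U₁ ω ≤ u₂} \ {ω | U₁ ω ≤ u₁}) ∩ {ω | U₂ ω ≤ v₁})).toReal := by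
        rw [hkey v₁, measure_union (hdisj v₁) (hm v₁),
          ENNReal.toReal_add (measure_ne_top _ _) (measure_ne_top _ _)]
      have hmono : (P (({ω | U₁ ω ≤ u₂} \ {ω | U₁ ω ≤ u₁}) ∩ {ω | U₂ ω ≤ v₁})).toReal ≤
          (P (({ω | U₁ ω ≤ u₂} \ {ω | U₁ ω ≤ u₁}) ∩ {ω | U₂ ω ≤ v₂})).toReal :=
        ENNReal.toReal_mono (measure_ne_top _ _)
          (measure_mono (Set.inter_subset_inter_right _ hsub₂))
      linarith
    · -- the Sklar identity
      intro x y
      show F x y = (P {ω | U₁ ω ≤ FX x ∧ U₂ ω ≤ FY y}).toReal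
      obtain ⟨E₁, hE₁m, hE₁0, hE₁⟩ := ae_event ν₁ x
      obtain ⟨E₂, hE₂m, hE₂0, hE₂⟩ := ae_event ν₂ y
      have hB₁0 : P ((Prod.map (Prod.fst : ℝ × ℝ → ℝ) (id : ℝ → ℝ)) ⁻¹' E₁) = 0 := by
        rw [hmp₁.measure_preimage hE₁m.nullMeasurableSet, hE₁0]
      have hB₂0 : P ((Prod.map (Prod.snd : ℝ × ℝ → ℝ) (id : ℝ → ℝ)) ⁻¹' E₂) = 0 := by
        rw [hmp₂.measure_preimage hE₂m.nullMeasurableSet, hE₂0]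
      have hae : {ω : (ℝ × ℝ) × ℝ | U₁ ω ≤ FX x ∧ U₂ ω ≤ FY y} =ᵐ[P]
          {ω : (ℝ × ℝ) × ℝ | ω.1.1 ≤ x ∧ ω.1.2 ≤ y} := by
        rw [Filter.eventuallyEq_set]
        filter_upwards [(measure_eq_zero_iff_ae_notMem (μ := P)).1 hB₁0,
          (measure_eq_zero_iff_ae_notMem (μ := P)).1 hB₂0] with ω hω₁ hω₂
        have h1 := hE₁ (ω.1.1, ω.2) hω₁
        have h2 := hE₂ (ω.1.2, ω.2) hω₂
        rw [← hFXG] at h1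
        rw [← hFYG] at h2
        exact and_congr h1 h2
      have hrect : P {ω : (ℝ × ℝ) × ℝ | ω.1.1 ≤ x ∧ ω.1.2 ≤ y} =
          μ {p : ℝ × ℝ | p.1 ≤ x ∧ p.2 ≤ y} := by
        have hset : {ω : (ℝ × ℝ) × ℝ | ω.1.1 ≤ x ∧ ω.1.2 ≤ y} =
            ({p : ℝ × ℝ | p.1 ≤ x ∧ p.2 ≤ y}) ×ˢ (univ : Set ℝ) := by
          ext ω; simp [Set.mem_prod]
        rw [hP, hset, Measure.prod_prod, measure_univ, mul_one]
      rw [hF, measure_congr hae, hrect]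
  · -- Uniqueness
    intro hcX hcY C₁ C₂ h₁ h₂ hC₁ hC₂ u hu v hv
    have hFXmono : Monotone FX := by
      intro a b hab
      rw [hFX a, hFX b]
      exact ENNReal.toReal_mono (measure_ne_top _ _)
        (measure_mono (fun p hp => le_trans hp hab))
    have hFYmono : Monotone FY := by
      intro a b hab
      rw [hFY a, hFY b]
      exact ENNReal.toReal_mono (measure_ne_top _ _)
        (measure_mono (fun p hp => le_trans hp hab))
    obtain ⟨_, hb₂, hb₃, hb₄, hb₅, _⟩ := h₁
    obtain ⟨_, hc₂, hc₃, hc₄, hc₅, _⟩ := h₂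
    rcases eq_or_lt_of_le hu.1 with rfl | hu0
    · rw [hb₃ v hv, hc₃ v hv]
    rcases eq_or_lt_of_le hu.2 with hu1 | hu1
    · rw [hu1, hb₅ v hv, hc₅ v hv]
    rcases eq_or_lt_of_le hv.1 with rfl | hv0
    · rw [hb₂ u hu, hc₂ u hu]
    rcases eq_or_lt_of_le hv.2 with hv1 | hv1
    · rw [hv1, hb₄ u hu, hc₄ u hu]
    -- interior case: find x, y with FX x = u, FY y = v
    have hexX : ∃ x, FX x = u := by
      have hlow : ∃ a : ℝ, FX a < u := by
        have hanti : Antitone (fun n : ℕ => {p : ℝ × ℝ | p.1 ≤ -(n:ℝ)}) := by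
          intro n m hnm p hp
          simp only [Set.mem_setOf_eq] at hp ⊢
          have : ((n:ℝ)) ≤ (m:ℝ) := by exact_mod_cast hnm
          linarith
        have hempty : ⋂ n : ℕ, {p : ℝ × ℝ | p.1 ≤ -(n:ℝ)} = (∅ : Set (ℝ × ℝ)) := by
          ext p
          simp only [mem_iInter, Set.mem_setOf_eq, mem_empty_iff_false, iff_false, not_forall]
          obtain ⟨n, hn⟩ := exists_nat_gt (-p.1)
          exact ⟨n, by push_neg; linarith⟩
        have ht := tendsto_measure_iInter_atTop (μ := μ)
          (s := fun n : ℕ => {p : ℝ × ℝ | p.1 ≤ -(n:ℝ)})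
          (fun n => (show MeasurableSet {p : ℝ × ℝ | p.1 ≤ -((n:ℕ):ℝ)} from
            measurable_fst measurableSet_Iic).nullMeasurableSet) hanti
          ⟨0, measure_ne_top μ _⟩
        rw [hempty, measure_empty] at ht
        have hev : ∀ᶠ n : ℕ in Filter.atTop,
            μ {p : ℝ × ℝ | p.1 ≤ -(n:ℝ)} ∈ Iio (ENNReal.ofReal u) :=
          ht (isOpen_Iio.mem_nhds (ENNReal.ofReal_pos.2 hu0))
        obtain ⟨n, hn⟩ := hev.exists
        exact ⟨-(n:ℝ), by rw [hFX]; exact ENNReal.toReal_lt_of_lt_ofReal hn⟩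
      have hhigh : ∃ b : ℝ, u < FX b := by
        have hmono' : Monotone (fun t : ℝ => {p : ℝ × ℝ | p.1 ≤ t}) := by
          intro a b hab p hp
          simp only [Set.mem_setOf_eq] at hp ⊢
          linarith
        have huniv : ⋃ t : ℕ, {p : ℝ × ℝ | p.1 ≤ (t:ℝ)} = (univ : Set (ℝ × ℝ)) := by
          ext p
          simp only [mem_iUnion, Set.mem_setOf_eq, mem_univ, iff_true]
          obtain ⟨n, hn⟩ := exists_nat_gt p.1
          exact ⟨n, hn.le⟩
        have hmono'' : Monotone (fun n : ℕ => {p : ℝ × ℝ | p.1 ≤ (n:ℝ)}) := by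
          intro a b hab
          exact hmono' (by exact_mod_cast hab)
        have ht := tendsto_measure_iUnion_atTop (μ := μ) hmono''
        rw [huniv, measure_univ] at ht
        have hev : ∀ᶠ n : ℕ in Filter.atTop,
            μ {p : ℝ × ℝ | p.1 ≤ (n:ℝ)} ∈ Ioi (ENNReal.ofReal u) :=
          ht (isOpen_Ioi.mem_nhds (ENNReal.ofReal_lt_one.2 hu1))
        obtain ⟨n, hn⟩ := hev.exists
        refine ⟨(n:ℝ), ?_⟩
        rw [hFX]
        have := ENNReal.toReal_strict_mono (measure_ne_top μ _) hn
        rwa [ENNReal.toReal_ofReal hu.1] at this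
      obtain ⟨a, ha⟩ := hlow
      obtain ⟨b, hb⟩ := hhigh
      have hab : a ≤ b := by
        by_contra h
        push_neg at h
        have := hFXmono h.le
        linarith
      have := intermediate_value_Icc hab hcX.continuousOn
      obtain ⟨x, _, hx⟩ := this ⟨ha.le, hb.le⟩
      exact ⟨x, hx⟩
    have hexY : ∃ y, FY y = v := by
      have hlow : ∃ a : ℝ, FY a < v := by
        have hanti : Antitone (fun n : ℕ => {p : ℝ × ℝ | p.2 ≤ -(n:ℝ)}) := by
          intro n m hnm p hp
          simp only [Set.mem_setOf_eq] at hp ⊢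
          have : ((n:ℝ)) ≤ (m:ℝ) := by exact_mod_cast hnm
          linarith
        have hempty : ⋂ n : ℕ, {p : ℝ × ℝ | p.2 ≤ -(n:ℝ)} = (∅ : Set (ℝ × ℝ)) := by
          ext p
          simp only [mem_iInter, Set.mem_setOf_eq, mem_empty_iff_false, iff_false, not_forall]
          obtain ⟨n, hn⟩ := exists_nat_gt (-p.2)
          exact ⟨n, by push_neg; linarith⟩
        have ht := tendsto_measure_iInter_atTop (μ := μ)
          (s := fun n : ℕ => {p : ℝ × ℝ | p.2 ≤ -(n:ℝ)})
          (fun n => (show MeasurableSet {p : ℝ × ℝ | p.2 ≤ -((n:ℕ):ℝ)} from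
            measurable_snd measurableSet_Iic).nullMeasurableSet) hanti
          ⟨0, measure_ne_top μ _⟩
        rw [hempty, measure_empty] at ht
        have hev : ∀ᶠ n : ℕ in Filter.atTop,
            μ {p : ℝ × ℝ | p.2 ≤ -(n:ℝ)} ∈ Iio (ENNReal.ofReal v) :=
          ht (isOpen_Iio.mem_nhds (ENNReal.ofReal_pos.2 hv0))
        obtain ⟨n, hn⟩ := hev.exists
        exact ⟨-(n:ℝ), by rw [hFY]; exact ENNReal.toReal_lt_of_lt_ofReal hn⟩
      have hhigh : ∃ b : ℝ, v < FY b := by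
        have hmono'' : Monotone (fun n : ℕ => {p : ℝ × ℝ | p.2 ≤ (n:ℝ)}) := by
          intro a b hab p hp
          simp only [Set.mem_setOf_eq] at hp ⊢
          have : ((a:ℝ)) ≤ (b:ℝ) := by exact_mod_cast hab
          linarith
        have huniv : ⋃ t : ℕ, {p : ℝ × ℝ | p.2 ≤ (t:ℝ)} = (univ : Set (ℝ × ℝ)) := by
          ext p
          simp only [mem_iUnion, Set.mem_setOf_eq, mem_univ, iff_true]
          obtain ⟨n, hn⟩ := exists_nat_gt p.2
          exact ⟨n, hn.le⟩
        have ht := tendsto_measure_iUnion_atTop (μ := μ) hmono''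
        rw [huniv, measure_univ] at ht
        have hev : ∀ᶠ n : ℕ in Filter.atTop,
            μ {p : ℝ × ℝ | p.2 ≤ (n:ℝ)} ∈ Ioi (ENNReal.ofReal v) :=
          ht (isOpen_Ioi.mem_nhds (ENNReal.ofReal_lt_one.2 hv1))
        obtain ⟨n, hn⟩ := hev.exists
        refine ⟨(n:ℝ), ?_⟩
        rw [hFY]
        have := ENNReal.toReal_strict_mono (measure_ne_top μ _) hn
        rwa [ENNReal.toReal_ofReal hv.1] at this
      obtain ⟨a, ha⟩ := hlow
      obtain ⟨b, hb⟩ := hhigh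
      have hab : a ≤ b := by
        by_contra h
        push_neg at h
        have := hFYmono h.le
        linarith
      have := intermediate_value_Icc hab hcY.continuousOn
      obtain ⟨y, _, hy⟩ := this ⟨ha.le, hb.le⟩
      exact ⟨y, hy⟩
    obtain ⟨x, hx⟩ := hexX
    obtain ⟨y, hy⟩ := hexY
    rw [← hx, ← hy, ← hC₁ x y, hC₂ x y]
end

section
/- Sklar's theorem (converse part): If C : [0,1]² → [0,1] is a bivariate copula and F_X, F_Y : ℝ → [0,1] are one-dimensional cumulative distribution functions (monotone nondecreasing, right-continuous, with limit 0 at −∞ and 1 at +∞), then the function H(x,y) := C(F_X(x), F_Y(y)) is a bivariate cumulative distribution function: it is 2-increasing (H(x₂,y₂) − H(x₁,y₂) − H(x₂,y₁) + H(x₁,y₁) ≥ 0 for x₁ ≤ x₂, y₁ ≤ y₂), right-continuous in each variable, tends to 0 as x → −∞ or y → −∞, and tends to 1 as both x → +∞ and y → +∞. -/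
open Set Filter Topology

/-- A one-dimensional cumulative distribution function with values in `[0,1]`:
monotone nondecreasing, right-continuous, with limit `0` at `-∞` and `1` at `+∞`. -/
def IsCDF (F : ℝ → ℝ) : Prop :=
  Monotone F ∧ (∀ x : ℝ, ContinuousWithinAt F (Ici x) x) ∧
  Tendsto F atBot (𝓝 0) ∧ Tendsto F atTop (𝓝 1) ∧ (∀ x : ℝ, F x ∈ Icc (0:ℝ) 1)

/-- **Sklar's theorem (converse part).** If `C` is a bivariate copula and `FX`, `FY` are
one-dimensional cdfs, then `H x y := C (FX x) (FY y)` is a bivariate cdf: it is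
2-increasing, right-continuous in each variable, tends to `0` as `x → -∞` or `y → -∞`,
and tends to `1` as both `x → +∞` and `y → +∞`. -/
theorem sklar_converse (C : ℝ → ℝ → ℝ) (hC : IsCopula C)
    (FX FY : ℝ → ℝ) (hFX : IsCDF FX) (hFY : IsCDF FY)
    (H : ℝ → ℝ → ℝ) (hH : ∀ x y : ℝ, H x y = C (FX x) (FY y)) :
    (∀ x₁ x₂ y₁ y₂ : ℝ, x₁ ≤ x₂ → y₁ ≤ y₂ →
      0 ≤ H x₂ y₂ - H x₁ y₂ - H x₂ y₁ + H x₁ y₁) ∧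
    (∀ x y : ℝ, ContinuousWithinAt (fun x' => H x' y) (Ici x) x) ∧
    (∀ x y : ℝ, ContinuousWithinAt (fun y' => H x y') (Ici y) y) ∧
    (∀ y : ℝ, Tendsto (fun x => H x y) atBot (𝓝 0)) ∧
    (∀ x : ℝ, Tendsto (fun y => H x y) atBot (𝓝 0)) ∧
    Tendsto (fun p : ℝ × ℝ => H p.1 p.2) (atTop ×ˢ atTop) (𝓝 1) := by
  obtain ⟨hCr, hCu0, hC0v, hCu1, hC1v, hC2⟩ := hC
  obtain ⟨hXm, hXrc, hXbot, hXtop, hXr⟩ := hFX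
  obtain ⟨hYm, hYrc, hYbot, hYtop, hYr⟩ := hFY
  have mem0 : (0:ℝ) ∈ Icc (0:ℝ) 1 := ⟨le_refl _, zero_le_one⟩
  have mem1 : (1:ℝ) ∈ Icc (0:ℝ) 1 := ⟨zero_le_one, le_refl _⟩
  -- C is monotone and 1-Lipschitz in the first variable
  have hmono1 : ∀ u₁ ∈ Icc (0:ℝ) 1, ∀ u₂ ∈ Icc (0:ℝ) 1, ∀ v ∈ Icc (0:ℝ) 1,
      u₁ ≤ u₂ → C u₁ v ≤ C u₂ v := by
    intro u₁ h₁ u₂ h₂ v hv h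
    have := hC2 u₁ h₁ u₂ h₂ 0 mem0 v hv h hv.1
    rw [hCu0 u₁ h₁, hCu0 u₂ h₂] at this
    linarith
  have hlip1 : ∀ u₁ ∈ Icc (0:ℝ) 1, ∀ u₂ ∈ Icc (0:ℝ) 1, ∀ v ∈ Icc (0:ℝ) 1,
      u₁ ≤ u₂ → C u₂ v ≤ C u₁ v + (u₂ - u₁) := by
    intro u₁ h₁ u₂ h₂ v hv h
    have := hC2 u₁ h₁ u₂ h₂ v hv 1 mem1 h hv.2
    rw [hCu1 u₁ h₁, hCu1 u₂ h₂] at this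
    linarith
  have hmono2 : ∀ u ∈ Icc (0:ℝ) 1, ∀ v₁ ∈ Icc (0:ℝ) 1, ∀ v₂ ∈ Icc (0:ℝ) 1,
      v₁ ≤ v₂ → C u v₁ ≤ C u v₂ := by
    intro u hu v₁ h₁ v₂ h₂ h
    have := hC2 0 mem0 u hu v₁ h₁ v₂ h₂ hu.1 h
    rw [hC0v v₁ h₁, hC0v v₂ h₂] at this
    linarith
  have hlip2 : ∀ u ∈ Icc (0:ℝ) 1, ∀ v₁ ∈ Icc (0:ℝ) 1, ∀ v₂ ∈ Icc (0:ℝ) 1,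
      v₁ ≤ v₂ → C u v₂ ≤ C u v₁ + (v₂ - v₁) := by
    intro u hu v₁ h₁ v₂ h₂ h
    have := hC2 u hu 1 mem1 v₁ h₁ v₂ h₂ hu.2 h
    rw [hC1v v₁ h₁, hC1v v₂ h₂] at this
    linarith
  have hub1 : ∀ u ∈ Icc (0:ℝ) 1, ∀ v ∈ Icc (0:ℝ) 1, C u v ≤ u := by
    intro u hu v hv
    have := hlip1 0 mem0 u hu v hv hu.1
    rw [hC0v v hv] at this
    linarith
  have hlb : ∀ u ∈ Icc (0:ℝ) 1, ∀ v ∈ Icc (0:ℝ) 1, u + v - 1 ≤ C u v := by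
    intro u hu v hv
    have := hC2 u hu 1 mem1 v hv 1 mem1 hu.2 hv.2
    rw [hCu1 u hu, hC1v v hv, hC1v 1 mem1] at this
    linarith
  refine ⟨?_, ?_, ?_, ?_, ?_, ?_⟩
  · intro x₁ x₂ y₁ y₂ hx hy
    simp only [hH]
    exact hC2 (FX x₁) (hXr x₁) (FX x₂) (hXr x₂) (FY y₁) (hYr y₁) (FY y₂) (hYr y₂)
      (hXm hx) (hYm hy)
  · intro x y
    have hup : Tendsto (fun x' => C (FX x) (FY y) + (FX x' - FX x)) (𝓝[Ici x] x)
        (𝓝 (C (FX x) (FY y))) := by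
      have : Tendsto (fun x' => FX x' - FX x) (𝓝[Ici x] x) (𝓝 0) := by
        simpa using (hXrc x).sub_const (FX x)
      simpa using (tendsto_const_nhds.add this)
    have key : Tendsto (fun x' => C (FX x') (FY y)) (𝓝[Ici x] x) (𝓝 (C (FX x) (FY y))) := by
      refine tendsto_of_tendsto_of_tendsto_of_le_of_le' tendsto_const_nhds hup ?_ ?_
      · filter_upwards [eventually_mem_nhdsWithin] with x' (hx' : x ≤ x')
        exact hmono1 (FX x) (hXr x) (FX x') (hXr x') (FY y) (hYr y) (hXm hx')
      · filter_upwards [eventually_mem_nhdsWithin] with x' (hx' : x ≤ x')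
        exact hlip1 (FX x) (hXr x) (FX x') (hXr x') (FY y) (hYr y) (hXm hx')
    simpa only [ContinuousWithinAt, hH] using key
  · intro x y
    have hup : Tendsto (fun y' => C (FX x) (FY y) + (FY y' - FY y)) (𝓝[Ici y] y)
        (𝓝 (C (FX x) (FY y))) := by
      have : Tendsto (fun y' => FY y' - FY y) (𝓝[Ici y] y) (𝓝 0) := by
        simpa using (hYrc y).sub_const (FY y)
      simpa using (tendsto_const_nhds.add this)
    have key : Tendsto (fun y' => C (FX x) (FY y')) (𝓝[Ici y] y) (𝓝 (C (FX x) (FY y))) := by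
      refine tendsto_of_tendsto_of_tendsto_of_le_of_le' tendsto_const_nhds hup ?_ ?_
      · filter_upwards [eventually_mem_nhdsWithin] with y' (hy' : y ≤ y')
        exact hmono2 (FX x) (hXr x) (FY y) (hYr y) (FY y') (hYr y') (hYm hy')
      · filter_upwards [eventually_mem_nhdsWithin] with y' (hy' : y ≤ y')
        exact hlip2 (FX x) (hXr x) (FY y) (hYr y) (FY y') (hYr y') (hYm hy')
    simpa only [ContinuousWithinAt, hH] using key
  · intro y
    simp only [hH]
    refine tendsto_of_tendsto_of_tendsto_of_le_of_le (g := fun _ => (0:ℝ)) (h := FX)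
      tendsto_const_nhds hXbot ?_ ?_
    · intro x; exact (hCr (FX x) (hXr x) (FY y) (hYr y)).1
    · intro x; exact hub1 (FX x) (hXr x) (FY y) (hYr y)
  · intro x
    simp only [hH]
    refine tendsto_of_tendsto_of_tendsto_of_le_of_le (g := fun _ => (0:ℝ)) (h := FY)
      tendsto_const_nhds hYbot ?_ ?_
    · intro y; exact (hCr (FX x) (hXr x) (FY y) (hYr y)).1
    · intro y
      have := hlip2 (FX x) (hXr x) 0 mem0 (FY y) (hYr y) (hYr y).1
      rw [hCu0 (FX x) (hXr x)] at this
      linarith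
  · simp only [hH]
    have hlow : Tendsto (fun p : ℝ × ℝ => FX p.1 + FY p.2 - 1) (atTop ×ˢ atTop) (𝓝 1) := by
      have h1 : Tendsto (fun p : ℝ × ℝ => FX p.1) (atTop ×ˢ atTop) (𝓝 1) :=
        hXtop.comp tendsto_fst
      have h2 : Tendsto (fun p : ℝ × ℝ => FY p.2) (atTop ×ˢ atTop) (𝓝 1) :=
        hYtop.comp tendsto_snd
      have := (h1.add h2).sub_const 1
      norm_num at this
      exact this
    refine tendsto_of_tendsto_of_tendsto_of_le_of_le hlow tendsto_const_nhds ?_ ?_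
    · intro p; exact hlb (FX p.1) (hXr p.1) (FY p.2) (hYr p.2)
    · intro p; exact (hCr (FX p.1) (hXr p.1) (FY p.2) (hYr p.2)).2
end

section
/- Maximum likelihood estimator of the Marshall–Olkin parameter for a complete sample: let n₁, n₂, n₃ be natural numbers with n₃ ≥ 1 and n₁ + n₂ ≥ 1, let n = n₁ + n₂ + n₃, and let S ≥ 0 be a real number. Then the log-likelihood function f(θ) = (n₁+n₂)·ln(1−θ) + n₃·ln θ + θ·S is strictly concave on (0,1) and attains its maximum on (0,1) at the unique point θ̂ = (1 + ẑ)^{−1}, where ẑ = ( n − 2n₃ − S + √(n² + S² − S(2n − 4n₃)) ) / (2n₃); equivalently θ̂ = (1 + exp(−ψ̂))^{−1} with ψ̂ = −ln ẑ. -/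
set_option maxHeartbeats 1000000

open Set Real

lemma MO_aux (a b S z θhat : ℝ) (ha : 1 ≤ a) (hb : 1 ≤ b) (hS : 0 ≤ S)
    (f : ℝ → ℝ)
    (hf : ∀ θ : ℝ, f θ = a * Real.log (1 - θ) + b * Real.log θ + θ * S)
    (hz : z = (a + b - 2*b - S +
      Real.sqrt ((a+b)^2 + S^2 - S * (2*(a+b) - 4*b))) / (2*b))
    (hθhat : θhat = (1 + z)⁻¹) :
    StrictConcaveOn ℝ (Ioo (0:ℝ) 1) f ∧
    θhat ∈ Ioo (0:ℝ) 1 ∧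
    (∀ θ ∈ Ioo (0:ℝ) 1, θ ≠ θhat → f θ < f θhat) ∧
    θhat = (1 + Real.exp (-(-Real.log z)))⁻¹ := by
  have ha0 : 0 < a := by linarith
  have hb0 : 0 < b := by linarith
  set D : ℝ := (a+b)^2 + S^2 - S * (2*(a+b) - 4*b) with hDdef
  have hDeq : D = (a - b - S)^2 + 4*a*b := by rw [hDdef]; ring
  have hDpos : 0 < D := by nlinarith
  set s : ℝ := Real.sqrt D with hsdef
  have hs2 : s^2 = D := Real.sq_sqrt hDpos.le
  have hsn : 0 ≤ s := Real.sqrt_nonneg _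
  have hzpos : 0 < z := by
    rw [hz]
    apply div_pos _ (by linarith)
    nlinarith [hs2, hDeq, mul_pos ha0 hb0, mul_nonneg hsn hsn]
  have h1z : (0:ℝ) < 1 + z := by linarith
  have hquad : b*z^2 + (b - a + S)*z - a = 0 := by
    have h1 : 2*b*z = (a - b - S) + s := by
      rw [hz]; field_simp; ring
    have h2 : (2*b*z - (a-b-S))^2 = (a-b-S)^2 + 4*a*b := by
      rw [show 2*b*z - (a-b-S) = s by linarith, hs2, hDeq]
    have h3 : (4*b) * (b*z^2 + (b - a + S)*z - a) = 0 := by linear_combination h2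
    have h4 : (4*b) ≠ 0 := by positivity
    exact (mul_eq_zero.mp h3).resolve_left h4
  have hθ0 : 0 < θhat := by rw [hθhat]; positivity
  have hθ1 : θhat < 1 := by
    rw [hθhat]
    rw [inv_lt_one_iff₀]
    right; linarith
  have hq : b*(1-θhat) - a*θhat + S*θhat*(1-θhat) = 0 := by
    rw [hθhat]
    have h1z' : (1:ℝ) + z ≠ 0 := ne_of_gt h1z
    field_simp
    linear_combination hquad
  -- derivative of f
  have hfd : ∀ x ∈ Ioo (0:ℝ) 1, HasDerivAt f (S + b/x - a/(1-x)) x := by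
    intro x hx
    have hx0 : x ≠ 0 := ne_of_gt hx.1
    have hx1 : (0:ℝ) < 1 - x := by linarith [hx.2]
    have h1 : HasDerivAt (fun θ : ℝ => Real.log (1-θ)) ((1-x)⁻¹ * (-1)) x :=
      (Real.hasDerivAt_log hx1.ne').comp x ((hasDerivAt_id x).const_sub 1)
    have h2 : HasDerivAt (fun θ : ℝ => Real.log θ) x⁻¹ x := Real.hasDerivAt_log hx0
    have h3 : HasDerivAt (fun θ : ℝ => θ * S) (1 * S) x := (hasDerivAt_id x).mul_const S
    have h4 := ((h1.const_mul a).add (h2.const_mul b)).add h3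
    have heq : f = fun θ => a * Real.log (1-θ) + b * Real.log θ + θ * S := funext hf
    rw [heq]
    refine h4.congr_deriv ?_
    ring
  -- derivative of the derivative
  have hgd : ∀ x ∈ Ioo (0:ℝ) 1,
      HasDerivAt (fun y : ℝ => S + b/y - a/(1-y)) (-(b/x^2) - a/(1-x)^2) x := by
    intro x hx
    have hx0 : x ≠ 0 := ne_of_gt hx.1
    have hx1 : (0:ℝ) < 1 - x := by linarith [hx.2]
    have h1 : HasDerivAt (fun y : ℝ => b/y) (b * (-(x^2)⁻¹)) x := by
      simpa [div_eq_mul_inv, mul_comm] using (hasDerivAt_inv hx0).const_mul b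
    have h2 : HasDerivAt (fun y : ℝ => (1-y)⁻¹) (-((1-x)^2)⁻¹ * (-1)) x :=
      (hasDerivAt_inv hx1.ne').comp x ((hasDerivAt_id x).const_sub 1)
    have h3 := (h1.const_add S).sub ((h2.const_mul a))
    have heq : (fun y : ℝ => S + b/y - a/(1-y)) = fun y : ℝ => S + b/y - a * (1-y)⁻¹ := by
      funext y; rw [div_eq_mul_inv a]
    rw [heq]
    refine h3.congr_deriv ?_
    ring
  -- strict concavity
  have hconc : StrictConcaveOn ℝ (Ioo (0:ℝ) 1) f := by
    apply strictConcaveOn_of_deriv2_neg (convex_Ioo 0 1)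
    · intro x hx
      exact (hfd x hx).continuousAt.continuousWithinAt
    · intro x hx
      rw [interior_Ioo] at hx
      have hev : deriv f =ᶠ[nhds x] (fun y : ℝ => S + b/y - a/(1-y)) := by
        filter_upwards [Ioo_mem_nhds hx.1 hx.2] with y hy
        exact (hfd y hy).deriv
      have h2 : deriv (deriv f) x = -(b/x^2) - a/(1-x)^2 := by
        rw [Filter.EventuallyEq.deriv_eq hev]
        exact (hgd x hx).deriv
      have hx1 : (0:ℝ) < 1 - x := by linarith [hx.2]
      have hp1 : 0 < b/x^2 := div_pos hb0 (pow_pos hx.1 2)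
      have hp2 : 0 < a/(1-x)^2 := div_pos ha0 (pow_pos hx1 2)
      show deriv^[2] f x < 0
      simp only [Function.iterate_succ, Function.iterate_zero, Function.comp_apply, id_eq]
      rw [h2]
      linarith
  refine ⟨hconc, ⟨hθ0, hθ1⟩, ?_, ?_⟩
  · intro θ hθmem hne
    have hQ : ∀ y ∈ Ioo (0:ℝ) 1, deriv f y = (b*(1-y) - a*y + S*y*(1-y))/(y*(1-y)) := by
      intro y hy
      rw [(hfd y hy).deriv]
      have hy0 : y ≠ 0 := ne_of_gt hy.1
      have hy1 : (0:ℝ) < 1 - y := by linarith [hy.2]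
      field_simp
      ring
    rcases lt_or_gt_of_ne hne with h | h
    · -- θ < θhat : f strictly increasing on Icc θ θhat
      have hsub : Icc θ θhat ⊆ Ioo (0:ℝ) 1 := fun y hy =>
        ⟨lt_of_lt_of_le hθmem.1 hy.1, lt_of_le_of_lt hy.2 hθ1⟩
      have hmono : StrictMonoOn f (Icc θ θhat) := by
        apply strictMonoOn_of_deriv_pos (convex_Icc _ _)
        · intro y hy
          exact (hfd y (hsub hy)).continuousAt.continuousWithinAt
        · intro y hy
          rw [interior_Icc] at hy
          have hy' : y ∈ Ioo (0:ℝ) 1 :=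
            ⟨lt_trans hθmem.1 hy.1, lt_trans hy.2 hθ1⟩
          rw [hQ y hy']
          have hy1 : (0:ℝ) < 1 - y := by linarith [hy'.2]
          apply div_pos _ (mul_pos hy'.1 hy1)
          have hfac : 0 < b + S*y*θhat := by
            nlinarith [mul_nonneg (mul_nonneg hS hy'.1.le) hθ0.le]
          nlinarith [hq, mul_pos (sub_pos.2 hy.2) hfac, hθ0]
      exact hmono ⟨le_refl θ, h.le⟩ ⟨h.le, le_refl θhat⟩ h
    · -- θhat < θ : f strictly decreasing on Icc θhat θ
      have hsub : Icc θhat θ ⊆ Ioo (0:ℝ) 1 := fun y hy =>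
        ⟨lt_of_lt_of_le hθ0 hy.1, lt_of_le_of_lt hy.2 hθmem.2⟩
      have hanti : StrictAntiOn f (Icc θhat θ) := by
        apply strictAntiOn_of_deriv_neg (convex_Icc _ _)
        · intro y hy
          exact (hfd y (hsub hy)).continuousAt.continuousWithinAt
        · intro y hy
          rw [interior_Icc] at hy
          have hy' : y ∈ Ioo (0:ℝ) 1 :=
            ⟨lt_trans hθ0 hy.1, lt_trans hy.2 hθmem.2⟩
          rw [hQ y hy']
          have hy1 : (0:ℝ) < 1 - y := by linarith [hy'.2]
          apply div_neg_of_neg_of_pos _ (mul_pos hy'.1 hy1)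
          have hfac : 0 < b + S*y*θhat := by
            nlinarith [mul_nonneg (mul_nonneg hS hy'.1.le) hθ0.le]
          nlinarith [hq, mul_pos (sub_pos.2 hy.1) hfac, hθ0]
      exact hanti ⟨le_refl θhat, h.le⟩ ⟨h.le, le_refl θ⟩ h
  · rw [hθhat, neg_neg, Real.exp_log hzpos]

/-- Maximum likelihood estimator of the Marshall–Olkin parameter for a complete sample:
the log-likelihood `f(θ) = (n₁+n₂)·ln(1-θ) + n₃·ln θ + θ·S` (with `n₃ ≥ 1`,
`n₁+n₂ ≥ 1`, `S ≥ 0`) is strictly concave on `(0,1)` and attains its maximum on `(0,1)`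
at the unique point `θ̂ = (1+ẑ)⁻¹`, where
`ẑ = (n - 2n₃ - S + √(n² + S² - S(2n - 4n₃)))/(2n₃)` and `n = n₁+n₂+n₃`;
equivalently `θ̂ = (1 + exp(-ψ̂))⁻¹` with `ψ̂ = -ln ẑ`. -/
theorem MO_mle_complete_sample (n₁ n₂ n₃ : ℕ) (hn₃ : 1 ≤ n₃) (hn₁₂ : 1 ≤ n₁ + n₂)
    (n : ℕ) (hn : n = n₁ + n₂ + n₃) (S : ℝ) (hS : 0 ≤ S)
    (f : ℝ → ℝ)
    (hf : ∀ θ : ℝ, f θ = ((n₁:ℝ) + n₂) * Real.log (1 - θ) + (n₃:ℝ) * Real.log θ + θ * S)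
    (z θhat : ℝ)
    (hz : z = ((n:ℝ) - 2*(n₃:ℝ) - S +
      Real.sqrt ((n:ℝ)^2 + S^2 - S * (2*(n:ℝ) - 4*(n₃:ℝ)))) / (2*(n₃:ℝ)))
    (hθhat : θhat = (1 + z)⁻¹) :
    StrictConcaveOn ℝ (Ioo (0:ℝ) 1) f ∧
    θhat ∈ Ioo (0:ℝ) 1 ∧
    (∀ θ ∈ Ioo (0:ℝ) 1, θ ≠ θhat → f θ < f θhat) ∧
    θhat = (1 + Real.exp (-(-Real.log z)))⁻¹ := by
  have hA : (1:ℝ) ≤ (n₁:ℝ) + (n₂:ℝ) := by exact_mod_cast hn₁₂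
  have hB : (1:ℝ) ≤ (n₃:ℝ) := by exact_mod_cast hn₃
  have hnR : (n:ℝ) = ((n₁:ℝ) + (n₂:ℝ)) + (n₃:ℝ) := by rw [hn]; push_cast; ring
  rw [hnR] at hz
  exact MO_aux ((n₁:ℝ) + n₂) (n₃:ℝ) S z θhat hA hB hS f hf hz hθhat
end

section
/- Critical point equation for the censored Marshall–Olkin log-likelihood: let m₁, m₂, m₃, r, s be natural numbers with m₃ ≥ 1, m = m₁+m₂+m₃, let S₁, S₂, S_max be real and S_min = S₁+S₂−S_max, and let g(ψ) = −(m₁+m₂+r+s)·ψ − (m+r+s)·ln(1+e^{−ψ}) − (S₁+S₂)·e^{−ψ}/(1+e^{−ψ}) − S_max/(1+e^{−ψ}). Then for every ψ ∈ ℝ, g'(ψ) = 0 if and only if m₃·e^{−2ψ} − (m+r+s−2m₃−S_min)·e^{−ψ} − (m+r+s−m₃) = 0. -/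
open Real

/-- Critical point equation for the censored Marshall–Olkin log-likelihood: with
`m = m₁+m₂+m₃` (`m₃ ≥ 1`), `S_min = S₁+S₂-S_max` and
`g(ψ) = -(m₁+m₂+r+s)·ψ - (m+r+s)·ln(1+e^{-ψ}) - (S₁+S₂)·e^{-ψ}/(1+e^{-ψ}) - S_max/(1+e^{-ψ})`,
for every `ψ ∈ ℝ`: `g'(ψ) = 0` if and only if
`m₃·e^{-2ψ} - (m+r+s-2m₃-S_min)·e^{-ψ} - (m+r+s-m₃) = 0`. -/
theorem censored_loglik_critical_point (m₁ m₂ m₃ r s : ℕ) (hm₃ : 1 ≤ m₃)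
    (m : ℕ) (hm : m = m₁ + m₂ + m₃)
    (S₁ S₂ Smax Smin : ℝ) (hSmin : Smin = S₁ + S₂ - Smax)
    (g : ℝ → ℝ)
    (hg : ∀ ψ : ℝ, g ψ =
      -((m₁:ℝ) + m₂ + r + s) * ψ - ((m:ℝ) + r + s) * Real.log (1 + Real.exp (-ψ))
        - (S₁ + S₂) * Real.exp (-ψ) / (1 + Real.exp (-ψ))
        - Smax / (1 + Real.exp (-ψ))) :
    ∀ ψ : ℝ, deriv g ψ = 0 ↔
      (m₃:ℝ) * Real.exp (-2*ψ) - ((m:ℝ) + r + s - 2*(m₃:ℝ) - Smin) * Real.exp (-ψ)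
        - ((m:ℝ) + r + s - m₃) = 0 := by
  have hgf : g = fun ψ : ℝ =>
      -((m₁:ℝ) + m₂ + r + s) * ψ - ((m:ℝ) + r + s) * Real.log (1 + Real.exp (-ψ))
        - (S₁ + S₂) * Real.exp (-ψ) / (1 + Real.exp (-ψ))
        - Smax / (1 + Real.exp (-ψ)) := funext hg
  intro ψ
  have hE : (0:ℝ) < Real.exp (-ψ) := Real.exp_pos _
  have hD : (0:ℝ) < 1 + Real.exp (-ψ) := by linarith
  have hD' : (1:ℝ) + Real.exp (-ψ) ≠ 0 := ne_of_gt hD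
  have hexp : HasDerivAt (fun x : ℝ => Real.exp (-x)) (-Real.exp (-ψ)) ψ := by
    exact ((Real.hasDerivAt_exp (-ψ)).comp ψ ((hasDerivAt_id ψ).neg)).congr_deriv (by simp)
  have hDd : HasDerivAt (fun x : ℝ => 1 + Real.exp (-x)) (-Real.exp (-ψ)) ψ := by
    exact hexp.const_add 1
  have h1 : HasDerivAt (fun x : ℝ => -((m₁:ℝ) + m₂ + r + s) * x)
      (-((m₁:ℝ) + m₂ + r + s)) ψ := by
    simpa using (hasDerivAt_id ψ).const_mul (-((m₁:ℝ) + m₂ + r + s))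
  have h2 : HasDerivAt (fun x : ℝ => ((m:ℝ) + r + s) * Real.log (1 + Real.exp (-x)))
      (((m:ℝ) + r + s) * ((1 + Real.exp (-ψ))⁻¹ * (-Real.exp (-ψ)))) ψ :=
    ((Real.hasDerivAt_log hD').comp ψ hDd).const_mul _
  have h3 : HasDerivAt (fun x : ℝ => (S₁ + S₂) * Real.exp (-x) / (1 + Real.exp (-x)))
      (((S₁ + S₂) * (-Real.exp (-ψ)) * (1 + Real.exp (-ψ)) -
        (S₁ + S₂) * Real.exp (-ψ) * (-Real.exp (-ψ))) / (1 + Real.exp (-ψ))^2) ψ :=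
    (hexp.const_mul (S₁ + S₂)).div hDd hD'
  have h4 : HasDerivAt (fun x : ℝ => Smax / (1 + Real.exp (-x)))
      ((0 * (1 + Real.exp (-ψ)) - Smax * (-Real.exp (-ψ))) / (1 + Real.exp (-ψ))^2) ψ :=
    (hasDerivAt_const ψ Smax).div hDd hD'
  have hder : HasDerivAt g (-((m₁:ℝ) + m₂ + r + s) -
      ((m:ℝ) + r + s) * ((1 + Real.exp (-ψ))⁻¹ * (-Real.exp (-ψ))) -
      ((S₁ + S₂) * (-Real.exp (-ψ)) * (1 + Real.exp (-ψ)) -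
        (S₁ + S₂) * Real.exp (-ψ) * (-Real.exp (-ψ))) / (1 + Real.exp (-ψ))^2 -
      (0 * (1 + Real.exp (-ψ)) - Smax * (-Real.exp (-ψ))) / (1 + Real.exp (-ψ))^2) ψ := by
    rw [hgf]; exact ((h1.sub h2).sub h3).sub h4
  rw [hder.deriv]
  have hmR : (m:ℝ) = (m₁:ℝ) + m₂ + m₃ := by exact_mod_cast congrArg (Nat.cast : ℕ → ℝ) hm
  have hE2 : Real.exp (-2*ψ) = Real.exp (-ψ) * Real.exp (-ψ) := by
    rw [← Real.exp_add]; ring_nf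
  have key : (-((m₁:ℝ) + m₂ + r + s) -
      ((m:ℝ) + r + s) * ((1 + Real.exp (-ψ))⁻¹ * (-Real.exp (-ψ))) -
      ((S₁ + S₂) * (-Real.exp (-ψ)) * (1 + Real.exp (-ψ)) -
        (S₁ + S₂) * Real.exp (-ψ) * (-Real.exp (-ψ))) / (1 + Real.exp (-ψ))^2 -
      (0 * (1 + Real.exp (-ψ)) - Smax * (-Real.exp (-ψ))) / (1 + Real.exp (-ψ))^2)
      = ((m₃:ℝ) * Real.exp (-2*ψ)
          - ((m:ℝ) + r + s - 2*(m₃:ℝ) - Smin) * Real.exp (-ψ)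
          - ((m:ℝ) + r + s - m₃)) / (1 + Real.exp (-ψ))^2 := by
    rw [hE2, hmR, hSmin]
    field_simp
    ring
  rw [key, div_eq_zero_iff]
  simp [pow_eq_zero_iff, hD']
end

section
/- Global maximum of the censored Marshall–Olkin log-likelihood: let m₁, m₂, m₃, r, s be natural numbers with m₃ ≥ 1 and m₁+m₂+r+s ≥ 1, m = m₁+m₂+m₃, let S₁, S₂, S_max be real with S_min = S₁+S₂−S_max, and let g(ψ) = −(m₁+m₂+r+s)·ψ − (m+r+s)·ln(1+e^{−ψ}) − (S₁+S₂)·e^{−ψ}/(1+e^{−ψ}) − S_max/(1+e^{−ψ}). Then g attains a strict global maximum over ℝ at the unique point ψ̂ = −ln z₁, where z₁ = ( m+r+s−2m₃−S_min + √((m+r+s−2m₃−S_min)² + 4m₃(m+r+s−m₃)) ) / (2m₃); that is, g(ψ) < g(ψ̂) for all ψ ≠ ψ̂. Consequently the censored maximum likelihood estimator θ̂_c = (1+e^{−ψ̂})^{−1} = (1+z₁)^{−1} lies in (0,1). -/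
open Set Real

set_option maxHeartbeats 1600000 in
/-- Global maximum of the censored Marshall–Olkin log-likelihood: with `m₃ ≥ 1`,
`m₁+m₂+r+s ≥ 1`, `m = m₁+m₂+m₃`, `S_min = S₁+S₂-S_max` and
`g(ψ) = -(m₁+m₂+r+s)·ψ - (m+r+s)·ln(1+e^{-ψ}) - (S₁+S₂)·e^{-ψ}/(1+e^{-ψ}) - S_max/(1+e^{-ψ})`,
`g` attains a strict global maximum over `ℝ` at the unique point `ψ̂ = -ln z₁`, where
`z₁ = (m+r+s-2m₃-S_min + √((m+r+s-2m₃-S_min)² + 4m₃(m+r+s-m₃)))/(2m₃)`.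
Consequently the censored MLE `θ̂_c = (1+e^{-ψ̂})⁻¹ = (1+z₁)⁻¹` lies in `(0,1)`. -/
theorem censored_loglik_global_max (m₁ m₂ m₃ r s : ℕ) (hm₃ : 1 ≤ m₃)
    (h₁ : 1 ≤ m₁ + m₂ + r + s) (m : ℕ) (hm : m = m₁ + m₂ + m₃)
    (S₁ S₂ Smax Smin : ℝ) (hSmin : Smin = S₁ + S₂ - Smax)
    (g : ℝ → ℝ)
    (hg : ∀ ψ : ℝ, g ψ =
      -((m₁:ℝ) + m₂ + r + s) * ψ - ((m:ℝ) + r + s) * Real.log (1 + Real.exp (-ψ))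
        - (S₁ + S₂) * Real.exp (-ψ) / (1 + Real.exp (-ψ))
        - Smax / (1 + Real.exp (-ψ)))
    (z₁ ψhat : ℝ)
    (hz₁ : z₁ = ((m:ℝ) + r + s - 2*(m₃:ℝ) - Smin +
      Real.sqrt (((m:ℝ) + r + s - 2*(m₃:ℝ) - Smin)^2
        + 4*(m₃:ℝ)*((m:ℝ) + r + s - m₃))) / (2*(m₃:ℝ)))
    (hψhat : ψhat = -Real.log z₁) :
    (∀ ψ : ℝ, ψ ≠ ψhat → g ψ < g ψhat) ∧
    (1 + Real.exp (-ψhat))⁻¹ = (1 + z₁)⁻¹ ∧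
    (1 + z₁)⁻¹ ∈ Ioo (0:ℝ) 1 := by
  -- basic quantities
  obtain ⟨A, hAdef⟩ : ∃ x : ℝ, x = (m₁:ℝ) + m₂ + r + s := ⟨_, rfl⟩
  obtain ⟨M, hMdef⟩ : ∃ x : ℝ, x = (m₃:ℝ) := ⟨_, rfl⟩
  have hApos : (1:ℝ) ≤ A := by
    have h' : (1:ℕ) ≤ m₁ + m₂ + r + s := h₁
    have h'' := (Nat.one_le_cast (α := ℝ)).2 h'
    push_cast at h''
    rw [hAdef]; linarith [h'']
  have hA0 : (0:ℝ) < A := by linarith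
  have hM1 : (1:ℝ) ≤ M := by rw [hMdef]; exact_mod_cast hm₃
  have hM0 : (0:ℝ) < M := by linarith
  have hb : ((m:ℝ) + r + s) = A + M := by
    rw [hm, hAdef, hMdef]; push_cast; ring
  obtain ⟨c, hcdef⟩ : ∃ x : ℝ, x = A - M - Smin := ⟨_, rfl⟩
  have hc1 : ((m:ℝ) + r + s - 2*(m₃:ℝ) - Smin) = c := by
    rw [hb, hcdef, ← hMdef]; ring
  have hc2 : (4*(m₃:ℝ)*((m:ℝ) + r + s - m₃)) = 4*M*A := by
    rw [hb, ← hMdef]; ring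
  obtain ⟨D, hDdef⟩ : ∃ x : ℝ, x = Real.sqrt (c^2 + 4*M*A) := ⟨_, rfl⟩
  have hz₁' : z₁ = (c + D)/(2*M) := by rw [hz₁, hc1, hc2, ← hDdef, ← hMdef]
  have hDnn : 0 ≤ D := by rw [hDdef]; exact Real.sqrt_nonneg _
  have hD2 : D^2 = c^2 + 4*M*A := by
    rw [hDdef]; exact Real.sq_sqrt (by nlinarith)
  have hcD : c + D > 0 := by nlinarith
  have hcD' : c - D < 0 := by nlinarith
  have hz₁pos : 0 < z₁ := by rw [hz₁']; positivity
  obtain ⟨z₂, hz₂def⟩ : ∃ x : ℝ, x = (c - D)/(2*M) := ⟨_, rfl⟩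
  have hz₂neg : z₂ < 0 := by
    rw [hz₂def]; exact div_neg_of_neg_of_pos hcD' (by linarith)
  have h2M : (2*M) ≠ 0 := by positivity
  have h1 : M * (z₁ + z₂) = c := by
    rw [hz₁', hz₂def]; field_simp; ring
  have h2 : M * (z₁ * z₂) = -A := by
    have key : (c+D)*(c-D) = -(4*M*A) := by linear_combination -hD2
    rw [hz₁', hz₂def, div_mul_div_comm, key]
    field_simp; ring
  have hq : ∀ z : ℝ, M*(z₁-z)*(z-z₂) = -M*z^2 + c*z + A := by
    intro z; linear_combination z*h1 - h2
  -- the function in terms of z = exp(-ψ)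
  obtain ⟨h, hhdef⟩ : ∃ f : ℝ → ℝ, f = fun z => A * Real.log z - (A+M) * Real.log (1+z)
      - (S₁+S₂)*z/(1+z) - Smax/(1+z) := ⟨_, rfl⟩
  have hgh : ∀ ψ : ℝ, g ψ = h (Real.exp (-ψ)) := by
    intro ψ
    rw [hg, hb, hhdef, hAdef]
    simp only [Real.log_exp]
    ring
  have hexp : Real.exp (-ψhat) = z₁ := by
    rw [hψhat, neg_neg, Real.exp_log hz₁pos]
  -- derivative of h
  have hd : ∀ z : ℝ, 0 < z → HasDerivAt h (M*(z₁-z)*(z-z₂)/(z*(1+z)^2)) z := by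
    intro z hz
    have h1z : (0:ℝ) < 1 + z := by linarith
    have d1 : HasDerivAt (fun z : ℝ => Real.log z) z⁻¹ z := Real.hasDerivAt_log hz.ne'
    have dlin : HasDerivAt (fun z : ℝ => 1 + z) 1 z := by
      simpa using (hasDerivAt_id z).const_add 1
    have d2 : HasDerivAt (fun z : ℝ => Real.log (1+z)) (1/(1+z)) z := dlin.log h1z.ne'
    have d3 : HasDerivAt (fun z : ℝ => (S₁+S₂)*z/(1+z))
        (((S₁+S₂)*(1+z) - (S₁+S₂)*z*1)/(1+z)^2) z := by
      exact (((hasDerivAt_id z).const_mul (S₁+S₂)).div dlin h1z.ne').congr_deriv (by simp)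
    have d4 : HasDerivAt (fun z : ℝ => Smax/(1+z))
        ((0*(1+z) - Smax*1)/(1+z)^2) z := by
      exact (hasDerivAt_const z Smax).div dlin h1z.ne'
    have big := (((d1.const_mul A).sub (d2.const_mul (A+M))).sub d3).sub d4
    rw [hhdef]
    refine big.congr_deriv ?_
    rw [hq z, hcdef, hSmin]
    have hz' : z ≠ 0 := hz.ne'
    have h1z' : (1+z) ≠ 0 := h1z.ne'
    field_simp
    ring
  -- strict monotonicity / antitonicity
  have hmono : StrictMonoOn h (Ioc 0 z₁) := by
    apply strictMonoOn_of_deriv_pos (convex_Ioc 0 z₁)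
    · intro z hz
      exact (hd z hz.1).continuousAt.continuousWithinAt
    · intro z hz
      rw [interior_Ioc] at hz
      rw [(hd z hz.1).deriv]
      apply div_pos
      · have hA1 : 0 < z₁ - z := by linarith [hz.2]
        have hA2 : 0 < z - z₂ := by linarith [hz.1]
        exact mul_pos (mul_pos hM0 hA1) hA2
      · have : 0 < z := hz.1
        positivity
  have hanti : StrictAntiOn h (Ici z₁) := by
    apply strictAntiOn_of_deriv_neg (convex_Ici z₁)
    · intro z hz
      exact (hd z (lt_of_lt_of_le hz₁pos hz)).continuousAt.continuousWithinAt
    · intro z hz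
      rw [interior_Ici] at hz
      have hz' : z₁ < z := hz
      have hz0 : 0 < z := lt_trans hz₁pos hz'
      rw [(hd z hz0).deriv]
      apply div_neg_of_neg_of_pos
      · exact mul_neg_of_neg_of_pos
          (mul_neg_of_pos_of_neg hM0 (by linarith)) (by linarith)
      · positivity
  have hmax : ∀ z : ℝ, 0 < z → z ≠ z₁ → h z < h z₁ := by
    intro z hz hne
    rcases hne.lt_or_gt with hlt | hgt
    · exact hmono ⟨hz, hlt.le⟩ ⟨hz₁pos, le_refl _⟩ hlt
    · exact hanti (le_refl z₁) hgt.le hgt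
  refine ⟨?_, ?_, ?_⟩
  · intro ψ hne
    rw [hgh, hgh, hexp]
    apply hmax _ (Real.exp_pos _)
    intro hEq
    apply hne
    have : Real.exp (-ψ) = Real.exp (-ψhat) := by rw [hEq, hexp]
    have := Real.exp_injective this
    linarith [neg_injective this]
  · rw [hexp]
  · constructor
    · positivity
    · rw [inv_lt_one_iff₀]
      right; linarith
end
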